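/- arXiv:1203.5750 — 2 statements merged into one kernel-verified Lean document; each statement's English description precedes it below -/
import Mathlib

section
/- For all integers k and l with k + l ≠ 0, the operators L_k satisfy L_k ∘ L_l − L_l ∘ L_k = N·(k − l)·L_{k+l} as linear operators on R. -/
/-!
Setup: `E ⊆ ℤ` a set of "exponents" with `E = -E`, `E ∩ Nℤ = ∅`, and `E + N ⊆ E`;
`R = ℂ[x_j : j ∈ E₊]` the polynomial ring; `p j` the operators `∂/∂x_j` (for `j ∈ E₊`)
and multiplication by `(-j)·x_{-j}` (for `-j ∈ E₊`); and the Virasoro operators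
`L_k f = (1/2)·Σ_{j∈E₊} ( p_{Nk-j}(p_j f) + p_{-j}(p_{Nk+j} f) )`, the sum being
locally finite (formalized via `finsum`).
-/

open MvPolynomial

noncomputable section

/-- The set `E₊` of positive exponents. -/
def Epos (E : Set ℤ) : Set ℤ := {i : ℤ | i ∈ E ∧ 0 < i}

/-- The polynomial ring `R = ℂ[x_j : j ∈ E₊]`. -/
abbrev Rng (E : Set ℤ) := MvPolynomial (Epos E) ℂ

open Classical in
/-- The operator `p_j` : for `j ∈ E₊` it is `∂/∂x_j`, for `-j ∈ E₊` it is
multiplication by `(-j)·x_{-j}`, and it is `0` for indices outside `E`. -/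
noncomputable def pOp (E : Set ℤ) (j : ℤ) : Rng E →ₗ[ℂ] Rng E :=
  if h : j ∈ Epos E then (pderiv (⟨j, h⟩ : Epos E)).toLinearMap
  else if h' : -j ∈ Epos E then
    LinearMap.mulLeft ℂ (MvPolynomial.C ((-j : ℤ) : ℂ) * MvPolynomial.X (⟨-j, h'⟩ : Epos E))
  else 0

/-- The Virasoro operator `L_k f = (1/2)·Σ_{j∈E₊} ( p_{Nk-j}(p_j f) + p_{-j}(p_{Nk+j} f) )`. -/
noncomputable def LOp (N : ℕ) (E : Set ℤ) (k : ℤ) (f : Rng E) : Rng E :=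
  (2 : ℂ)⁻¹ • ∑ᶠ j ∈ Epos E,
    (pOp E ((N : ℤ) * k - j) (pOp E j f) + pOp E (-j) (pOp E ((N : ℤ) * k + j) f))

-- ## basic pOp lemmas

lemma pOp_pos {E : Set ℤ} {j : ℤ} (h : j ∈ Epos E) (f : Rng E) :
    pOp E j f = pderiv (⟨j, h⟩ : Epos E) f := by
  rw [pOp, dif_pos h]; rfl

lemma pOp_negm {E : Set ℤ} {j : ℤ} (h : -j ∈ Epos E) (f : Rng E) :
    pOp E j f = MvPolynomial.C ((-j : ℤ) : ℂ) * MvPolynomial.X (⟨-j, h⟩ : Epos E) * f := by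
  have hj : j ∉ Epos E := by
    intro hj; have := hj.2; have := h.2; omega
  rw [pOp, dif_neg hj, dif_pos h]; rfl

lemma pOp_none {E : Set ℤ} {j : ℤ} (h : j ∉ Epos E) (h' : -j ∉ Epos E) :
    pOp E j = 0 := by
  rw [pOp, dif_neg h, dif_neg h']

lemma pOp_not_memE {E : Set ℤ} (hEneg : ∀ j : ℤ, j ∈ E ↔ -j ∈ E) {j : ℤ} (h : j ∉ E) :
    pOp E j = 0 := by
  apply pOp_none
  · exact fun hj => h hj.1
  · exact fun hj => h ((hEneg j).mpr hj.1)

-- commutation of two pderivs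
lemma pderiv_pderiv_comm {σ : Type*} (i j : σ) (f : MvPolynomial σ ℂ) :
    pderiv i (pderiv j f) = pderiv j (pderiv i f) := by
  classical
  induction f using MvPolynomial.induction_on' with
  | monomial s a =>
    simp only [pderiv_monomial]
    by_cases hij : i = j
    · subst hij; rfl
    · rw [Finsupp.coe_tsub, Pi.sub_apply, Finsupp.coe_tsub, Pi.sub_apply,
        Finsupp.single_eq_of_ne' (Ne.symm hij), Finsupp.single_eq_of_ne' hij,
        tsub_zero, tsub_zero, tsub_tsub, tsub_tsub, add_comm (Finsupp.single j 1)]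
      ring_nf
  | add p q hp hq => simp [hp, hq]

-- E utilities
section Eutil
variable {N : ℕ} {E : Set ℤ}

lemma Eshift (hEneg : ∀ j : ℤ, j ∈ E ↔ -j ∈ E) (hEadd : ∀ j ∈ E, j + (N : ℤ) ∈ E)
    (c : ℤ) {j : ℤ} (hj : j ∈ E) : j + (N : ℤ) * c ∈ E := by
  have hsub : ∀ i ∈ E, i - (N : ℤ) ∈ E := by
    intro i hi
    have h2 : -i + N ∈ E := hEadd _ ((hEneg i).mp hi)
    have h3 := (hEneg (-i + N)).mp h2
    have : -(-i + (N : ℤ)) = i - N := by ring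
    rwa [this] at h3
  induction c using Int.induction_on with
  | zero => simpa using hj
  | succ n ih =>
    have := hEadd _ ih
    have he : j + (N : ℤ) * n + N = j + (N : ℤ) * (n + 1) := by ring
    rwa [he] at this
  | pred n ih =>
    have := hsub _ ih
    have he : j + (N : ℤ) * (-n) - N = j + (N : ℤ) * (-n - 1) := by ring
    rwa [he] at this

lemma Ene_zero (hEdvd : ∀ j ∈ E, ¬ ((N : ℤ) ∣ j)) {j : ℤ} (hj : j ∈ E) : j ≠ 0 := by
  rintro rfl; exact hEdvd 0 hj (dvd_zero _)

end Eutil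

-- clean multiplication form of pOp at a negative index
lemma pOp_mul {E : Set ℤ} {j : ℤ} (h : j ∈ Epos E) (f : Rng E) :
    pOp E (-j) f = MvPolynomial.C ((j : ℤ) : ℂ) * MvPolynomial.X (⟨j, h⟩ : Epos E) * f := by
  have h2 : -(-j) ∈ Epos E := by simpa using h
  have h1 : -j ∉ Epos E := by
    intro hj; have := hj.2; have := h.2; omega
  rw [pOp, dif_neg h1, dif_pos h2]
  simp only [LinearMap.mulLeft_apply, neg_neg]

open Classical in
-- the commutator coefficient
noncomputable def ccoef (E : Set ℤ) (b m : ℤ) : ℂ := if m = -b ∧ b ∈ E then (b : ℂ) else 0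

-- the canonical cancellation
lemma pOp_cancel {E : Set ℤ} {j : ℤ} (h : j ∈ Epos E) (f : Rng E) :
    pderiv (⟨j, h⟩ : Epos E) (MvPolynomial.C ((j : ℤ) : ℂ) * MvPolynomial.X (⟨j, h⟩ : Epos E) * f)
      = MvPolynomial.C ((j : ℤ) : ℂ) * MvPolynomial.X (⟨j, h⟩ : Epos E) * pderiv (⟨j, h⟩ : Epos E) f
        + (j : ℂ) • f := by
  rw [mul_assoc, pderiv_C_mul, pderiv_mul, pderiv_X_self, one_mul, mul_add, ← mul_assoc,
    MvPolynomial.C_mul']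
  abel

lemma pderiv_mul_CX {E : Set ℤ} {i j : ℤ} (hi : i ∈ Epos E) (hj : j ∈ Epos E) (hne : i ≠ j)
    (c : ℂ) (f : Rng E) :
    pderiv (⟨i, hi⟩ : Epos E) (MvPolynomial.C c * MvPolynomial.X (⟨j, hj⟩ : Epos E) * f)
      = MvPolynomial.C c * MvPolynomial.X (⟨j, hj⟩ : Epos E) * pderiv (⟨i, hi⟩ : Epos E) f := by
  have hne' : (⟨j, hj⟩ : Epos E) ≠ ⟨i, hi⟩ := by simp [Subtype.ext_iff, hne.symm]
  rw [mul_assoc, pderiv_C_mul, pderiv_mul, pderiv_X_of_ne hne', zero_mul, zero_add, mul_assoc]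

section Swap
variable {E : Set ℤ} (hEneg : ∀ j : ℤ, j ∈ E ↔ -j ∈ E)

include hEneg in
/-- full commutation relation for the `pOp`s. -/
lemma pOp_swap (b m : ℤ) (f : Rng E) :
    pOp E b (pOp E m f) = pOp E m (pOp E b f) + ccoef E b m • f := by
  rcases eq_or_ne m (-b) with rfl | hbm
  · -- delta case
    by_cases hb : b ∈ E
    · have hcc : ccoef E b (-b) = (b : ℂ) := by simp [ccoef, hb]
      rw [hcc]
      rcases lt_trichotomy b 0 with hb0 | hb0 | hb0
      · -- b < 0
        have hmb : -b ∈ Epos E := ⟨(hEneg b).mp hb, by omega⟩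
        have e1 : pOp E b (pOp E (-b) f)
            = MvPolynomial.C ((-b : ℤ) : ℂ) * MvPolynomial.X (⟨-b, hmb⟩ : Epos E)
              * pderiv (⟨-b, hmb⟩ : Epos E) f := by
          rw [pOp_pos hmb f]
          have := pOp_mul (E := E) hmb (pderiv (⟨-b, hmb⟩ : Epos E) f)
          rwa [neg_neg] at this
        have e2 : pOp E (-b) (pOp E b f)
            = MvPolynomial.C ((-b : ℤ) : ℂ) * MvPolynomial.X (⟨-b, hmb⟩ : Epos E)
              * pderiv (⟨-b, hmb⟩ : Epos E) f + ((-b : ℤ) : ℂ) • f := by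
          have h1 : pOp E b f
              = MvPolynomial.C ((-b : ℤ) : ℂ) * MvPolynomial.X (⟨-b, hmb⟩ : Epos E) * f := by
            have := pOp_mul (E := E) hmb f
            rwa [neg_neg] at this
          rw [h1, pOp_pos hmb, pOp_cancel hmb f]
        rw [e1, e2]
        push_cast
        rw [neg_smul]
        abel
      · subst hb0
        have h0 : (0 : ℤ) ∉ Epos E := fun h => by exact absurd h.2 (by omega)
        rw [pOp_none h0 (by simpa using h0)]
        simp
      · -- b > 0
        have hbE : b ∈ Epos E := ⟨hb, hb0⟩
        have e1 : pOp E b (pOp E (-b) f)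
            = MvPolynomial.C ((b : ℤ) : ℂ) * MvPolynomial.X (⟨b, hbE⟩ : Epos E)
              * pderiv (⟨b, hbE⟩ : Epos E) f + ((b : ℤ) : ℂ) • f := by
          rw [pOp_mul hbE f, pOp_pos hbE, pOp_cancel hbE f]
        have e2 : pOp E (-b) (pOp E b f)
            = MvPolynomial.C ((b : ℤ) : ℂ) * MvPolynomial.X (⟨b, hbE⟩ : Epos E)
              * pderiv (⟨b, hbE⟩ : Epos E) f := by
          rw [pOp_pos hbE f, pOp_mul hbE]
        rw [e1, e2]
    · -- b ∉ E
      have h1 : pOp E b = 0 := pOp_not_memE hEneg hb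
      have h2 : pOp E (-b) = 0 := by
        apply pOp_not_memE hEneg
        intro h; exact hb (by simpa using (hEneg (-b)).mp h)
      simp [h1, h2, ccoef, hb]
  · -- commuting case
    have hcc : ccoef E b m = 0 := by simp [ccoef, hbm]
    rw [hcc, zero_smul, add_zero]
    -- kill zero cases
    by_cases hbz : pOp E b = 0
    · simp [hbz]
    by_cases hmz : pOp E m = 0
    · simp [hmz]
    -- both active
    have hbA : b ∈ Epos E ∨ -b ∈ Epos E := by
      by_contra h; push_neg at h; exact hbz (pOp_none h.1 h.2)
    have hmA : m ∈ Epos E ∨ -m ∈ Epos E := by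
      by_contra h; push_neg at h; exact hmz (pOp_none h.1 h.2)
    have key : ∀ (x y : ℤ), x ∈ Epos E ∨ -x ∈ Epos E → y ∈ Epos E ∨ -y ∈ Epos E →
        y ≠ -x → pOp E x (pOp E y f) = pOp E y (pOp E x f) → True := fun _ _ _ _ _ _ => trivial
    clear key
    rcases hbA with hbA | hbA <;> rcases hmA with hmA | hmA
    · rw [pOp_pos hbA, pOp_pos hmA, pOp_pos hmA, pOp_pos hbA, pderiv_pderiv_comm]
    · -- b pos, m neg : m = -(-m)
      have hm' : m = -(-m) := by ring
      have hne : b ≠ -m := by omega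
      rw [pOp_pos hbA (pOp E m f), pOp_pos hbA f]
      conv_lhs => rw [hm', pOp_mul hmA f]
      conv_rhs => rw [hm', pOp_mul hmA (pderiv (⟨b, hbA⟩ : Epos E) f)]
      exact pderiv_mul_CX hbA hmA hne _ f
    · -- b neg, m pos
      have hne : m ≠ -b := hbm
      rw [pOp_pos hmA (pOp E b f), pOp_pos hmA f]
      have hb' : b = -(-b) := by ring
      conv_lhs => rw [hb', pOp_mul hbA (pderiv (⟨m, hmA⟩ : Epos E) f)]
      conv_rhs => rw [hb', pOp_mul hbA f]
      exact (pderiv_mul_CX hmA hbA (by omega) _ f).symm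
    · -- both neg : multiplications commute
      have hb' : b = -(-b) := by ring
      have hm' : m = -(-m) := by ring
      conv_lhs => rw [hm', pOp_mul hmA f, hb', pOp_mul hbA]
      conv_rhs => rw [hb', pOp_mul hbA f, hm', pOp_mul hmA]
      ring

end Swap
section Supp
variable {N : ℕ} {E : Set ℤ} (hEneg : ∀ j : ℤ, j ∈ E ↔ -j ∈ E)

include hEneg in
lemma pOp_comm {b m : ℤ} (hbm : b + m ≠ 0) (f : Rng E) :
    pOp E b (pOp E m f) = pOp E m (pOp E b f) := by
  have := pOp_swap hEneg b m f
  have hc : ccoef E b m = 0 := by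
    have : m ≠ -b := by omega
    simp [ccoef, this]
  rw [hc, zero_smul, add_zero] at this
  exact this

open Classical in
/-- the set of (integer labels of) variables occurring in `f` -/
noncomputable def varF {E : Set ℤ} (f : Rng E) : Finset ℤ := f.vars.image Subtype.val

lemma pOp_pos_zero {E : Set ℤ} {j : ℤ} (hj : 0 < j) {f : Rng E} (h : j ∉ varF f) :
    pOp E j f = 0 := by
  classical
  by_cases hE : j ∈ Epos E
  · rw [pOp_pos hE f]
    apply pderiv_eq_zero_of_notMem_vars
    intro hv
    exact h (Finset.mem_image.mpr ⟨_, hv, rfl⟩)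
  · have hE' : -j ∉ Epos E := fun h' => by have := h'.2; omega
    rw [pOp_none hE hE']; rfl

lemma varF_pOp_neg {E : Set ℤ} (j : ℤ) (f : Rng E) (v : ℤ) (hv : v ∈ varF (pOp E (-j) f))
    (hj : j ∈ Epos E) : v = j ∨ v ∈ varF f := by
  classical
  rw [pOp_mul hj f] at hv
  obtain ⟨w, hw, rfl⟩ := Finset.mem_image.mp hv
  have := MvPolynomial.vars_mul (MvPolynomial.C ((j : ℤ) : ℂ) * MvPolynomial.X (⟨j, hj⟩ : Epos E)) f hw
  rcases Finset.mem_union.mp this with h | h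
  · left
    have := MvPolynomial.vars_mul (MvPolynomial.C ((j : ℤ) : ℂ)) (MvPolynomial.X (⟨j, hj⟩ : Epos E)) h
    rcases Finset.mem_union.mp this with h' | h'
    · rw [MvPolynomial.vars_C] at h'
      exact absurd h' (Finset.notMem_empty _)
    · rw [MvPolynomial.vars_X] at h'
      have := Finset.mem_singleton.mp h'
      rw [this]
  · right; exact Finset.mem_image.mpr ⟨_, h, rfl⟩

end Supp
-- ## the summand of `LOp` and its support

noncomputable def Tm (N : ℕ) (E : Set ℤ) (k j : ℤ) (f : Rng E) : Rng E :=
  pOp E ((N : ℤ) * k - j) (pOp E j f) + pOp E (-j) (pOp E ((N : ℤ) * k + j) f)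

lemma LOp_def (N : ℕ) (E : Set ℤ) (k : ℤ) (f : Rng E) :
    LOp N E k f = (2 : ℂ)⁻¹ • ∑ᶠ j ∈ Epos E, Tm N E k j f := rfl

noncomputable def TS (N : ℕ) {E : Set ℤ} (k : ℤ) (f : Rng E) : Finset ℤ :=
  varF f ∪ (varF f).image (fun v => v - (N : ℤ) * k) ∪ Finset.Icc 1 (-((N : ℤ) * k))

lemma pOp_zero_idx (E : Set ℤ) (f : Rng E) : pOp E 0 f = 0 := by
  have h0 : (0 : ℤ) ∉ Epos E := fun h => absurd h.2 (by omega)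
  rw [pOp_none h0 (by simpa using h0)]; rfl

lemma Tm_supp {N : ℕ} {E : Set ℤ} {k j : ℤ} {f : Rng E} (hj : 0 < j)
    (h : Tm N E k j f ≠ 0) : j ∈ TS N k f := by
  by_contra hts
  apply h
  have h1 : pOp E j f = 0 := by
    apply pOp_pos_zero hj
    intro hv
    exact hts (Finset.mem_union_left _ (Finset.mem_union_left _ hv))
  have h2 : pOp E ((N : ℤ) * k + j) f = 0 := by
    rcases lt_trichotomy ((N : ℤ) * k + j) 0 with hc | hc | hc
    · exfalso
      apply hts
      apply Finset.mem_union_right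
      rw [Finset.mem_Icc]
      omega
    · rw [hc]; exact pOp_zero_idx E f
    · apply pOp_pos_zero hc
      intro hv
      apply hts
      apply Finset.mem_union_left
      apply Finset.mem_union_right
      refine Finset.mem_image.mpr ⟨_, hv, by ring⟩
  rw [Tm, h1, h2, map_zero, map_zero, add_zero]

lemma Tm_supp_fin (N : ℕ) (E : Set ℤ) (k : ℤ) (f : Rng E) :
    (Epos E ∩ Function.support (fun j => Tm N E k j f)).Finite := by
  apply Set.Finite.subset (TS N k f).finite_toSet
  rintro j ⟨hj, hsup⟩
  exact Tm_supp hj.2 hsup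

lemma LOp_eq_sum {N : ℕ} {E : Set ℤ} {k : ℤ} {f : Rng E} (s : Finset ℤ)
    (hs1 : ↑s ⊆ Epos E) (hs2 : ∀ j ∈ Epos E, Tm N E k j f ≠ 0 → j ∈ s) :
    LOp N E k f = (2 : ℂ)⁻¹ • ∑ j ∈ s, Tm N E k j f := by
  rw [LOp_def]
  congr 1
  apply finsum_mem_eq_sum_of_inter_support_eq
  ext x
  constructor
  · rintro ⟨hE, hsup⟩; exact ⟨hs2 x hE hsup, hsup⟩
  · rintro ⟨hxs, hsup⟩; exact ⟨hs1 hxs, hsup⟩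

lemma LOp_add (N : ℕ) (E : Set ℤ) (k : ℤ) (f g : Rng E) :
    LOp N E k (f + g) = LOp N E k f + LOp N E k g := by
  rw [LOp_def, LOp_def, LOp_def, ← smul_add]
  congr 1
  have he : ∀ j, Tm N E k j (f + g) = Tm N E k j f + Tm N E k j g := by
    intro j; simp [Tm, map_add]; abel
  rw [finsum_mem_congr rfl (fun j _ => he j)]
  exact finsum_mem_add_distrib' (Tm_supp_fin N E k f) (Tm_supp_fin N E k g)

lemma LOp_smul (N : ℕ) (E : Set ℤ) (k : ℤ) (c : ℂ) (f : Rng E) :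
    LOp N E k (c • f) = c • LOp N E k f := by
  rw [LOp_def, LOp_def, smul_comm]
  congr 1
  have he : ∀ j, Tm N E k j (c • f) = c • Tm N E k j f := by
    intro j; simp [Tm, map_smul, smul_add]
  rw [finsum_mem_congr rfl (fun j _ => he j)]
  exact ((smulAddHom ℂ (Rng E) c).map_finsum_mem' (Tm_supp_fin N E k f)).symm

lemma LOp_zero (N : ℕ) (E : Set ℤ) (k : ℤ) : LOp N E k 0 = 0 := by
  have := LOp_smul N E k 0 0
  simpa using this

noncomputable def LOpL (N : ℕ) (E : Set ℤ) (k : ℤ) : Rng E →ₗ[ℂ] Rng E where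
  toFun := LOp N E k
  map_add' := LOp_add N E k
  map_smul' := LOp_smul N E k
-- ## Lemma A : commutator of `LOp` with a single `pOp`

section LemA
variable {N : ℕ} {E : Set ℤ}
  (hEneg : ∀ j : ℤ, j ∈ E ↔ -j ∈ E)
  (hEdvd : ∀ j ∈ E, ¬ ((N : ℤ) ∣ j))
  (hEadd : ∀ j ∈ E, j + (N : ℤ) ∈ E)

include hEneg in
lemma Tm_pOp (k m j : ℤ) (f : Rng E) :
    Tm N E k j (pOp E m f)
      = pOp E m (Tm N E k j f)
        + (ccoef E j m • pOp E ((N : ℤ) * k - j) f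
          + ccoef E ((N : ℤ) * k - j) m • pOp E j f
          + ccoef E ((N : ℤ) * k + j) m • pOp E (-j) f
          + ccoef E (-j) m • pOp E ((N : ℤ) * k + j) f) := by
  rw [Tm, Tm, pOp_swap hEneg j m f, pOp_swap hEneg ((N : ℤ) * k + j) m f]
  rw [map_add, map_add, map_smul, map_smul,
    pOp_swap hEneg ((N : ℤ) * k - j) m (pOp E j f),
    pOp_swap hEneg (-j) m (pOp E ((N : ℤ) * k + j) f), map_add]
  abel

include hEneg hEdvd hEadd in
set_option maxHeartbeats 1000000 in
lemma LOp_pOp (k m : ℤ) (f : Rng E) :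
    LOp N E k (pOp E m f)
      = pOp E m (LOp N E k f) + (-(m : ℂ)) • pOp E ((N : ℤ) * k + m) f := by
  classical
  by_cases hm : m ∈ E
  · have hmne : m ≠ 0 := Ene_zero hEdvd hm
    have hm2 : (N : ℤ) * k + m ∈ E := by
      have := Eshift hEneg hEadd k hm
      rwa [add_comm] at this
    have hm2ne : (N : ℤ) * k + m ≠ 0 := Ene_zero hEdvd hm2
    have hmE' : -m ∈ E := (hEneg m).mp hm
    set s : Finset ℤ :=
      (TS N k (pOp E m f) ∪ TS N k f ∪ {m, -m, (N : ℤ) * k + m, -((N : ℤ) * k + m)}).filter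
        (· ∈ Epos E) with hs
    have hs1 : ↑s ⊆ Epos E := by
      intro x hx
      exact (Finset.mem_filter.mp hx).2
    have rep1 : LOp N E k (pOp E m f) = (2 : ℂ)⁻¹ • ∑ j ∈ s, Tm N E k j (pOp E m f) := by
      apply LOp_eq_sum s hs1
      intro j hj hne
      exact Finset.mem_filter.mpr
        ⟨Finset.mem_union_left _ (Finset.mem_union_left _ (Tm_supp hj.2 hne)), hj⟩
    have rep2 : LOp N E k f = (2 : ℂ)⁻¹ • ∑ j ∈ s, Tm N E k j f := by
      apply LOp_eq_sum s hs1
      intro j hj hne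
      exact Finset.mem_filter.mpr
        ⟨Finset.mem_union_left _ (Finset.mem_union_right _ (Tm_supp hj.2 hne)), hj⟩
    set v : Rng E := ((-m : ℤ) : ℂ) • pOp E ((N : ℤ) * k + m) f with hv
    have hccm : ccoef E (-m) m = ((-m : ℤ) : ℂ) := by
      simp [ccoef, hmE']
    have hnotmem : ∀ x : ℤ, x ≤ 0 → x ∉ s := by
      intro x hx0 hx
      have := (hs1 hx).2
      omega
    have hmem : ∀ x : ℤ, x ∈ E → 0 < x →
        x ∈ ({m, -m, (N : ℤ) * k + m, -((N : ℤ) * k + m)} : Finset ℤ) → x ∈ s := by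
      intro x hxE hx0 hxl
      exact Finset.mem_filter.mpr ⟨Finset.mem_union_right _ hxl, ⟨hxE, hx0⟩⟩
    -- the four delta sums
    have z1 : ∀ j, j ≠ -m → ccoef E j m • pOp E ((N : ℤ) * k - j) f = 0 := by
      intro j hj
      rw [ccoef, if_neg (fun h => hj (by omega)), zero_smul]
    have e1 : ccoef E (-m) m • pOp E ((N : ℤ) * k - (-m)) f = v := by
      rw [hccm, hv]
      congr 2
      ring
    have z2 : ∀ j, j ≠ (N : ℤ) * k + m → ccoef E ((N : ℤ) * k - j) m • pOp E j f = 0 := by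
      intro j hj
      rw [ccoef, if_neg (fun h => hj (by omega)), zero_smul]
    have e2 : ccoef E ((N : ℤ) * k - ((N : ℤ) * k + m)) m • pOp E ((N : ℤ) * k + m) f = v := by
      have he : (N : ℤ) * k - ((N : ℤ) * k + m) = -m := by ring
      rw [he, hccm, hv]
    have z3 : ∀ j, j ≠ -((N : ℤ) * k + m) → ccoef E ((N : ℤ) * k + j) m • pOp E (-j) f = 0 := by
      intro j hj
      rw [ccoef, if_neg (fun h => hj (by omega)), zero_smul]
    have e3 : ccoef E ((N : ℤ) * k + -((N : ℤ) * k + m)) m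
        • pOp E (-(-((N : ℤ) * k + m))) f = v := by
      have he : (N : ℤ) * k + -((N : ℤ) * k + m) = -m := by ring
      have he2 : -(-((N : ℤ) * k + m)) = (N : ℤ) * k + m := by ring
      rw [he, he2, hccm, hv]
    have z4 : ∀ j, j ≠ m → ccoef E (-j) m • pOp E ((N : ℤ) * k + j) f = 0 := by
      intro j hj
      rw [ccoef, if_neg (fun h => hj (by omega)), zero_smul]
    have e4 : ccoef E (-m) m • pOp E ((N : ℤ) * k + m) f = v := by
      rw [hccm, hv]
    -- sums 1 and 4 together give v
    have hd1 : ∑ j ∈ s, ccoef E j m • pOp E ((N : ℤ) * k - j) f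
        + ∑ j ∈ s, ccoef E (-j) m • pOp E ((N : ℤ) * k + j) f = v := by
      rcases lt_trichotomy m 0 with h0 | h0 | h0
      · rw [Finset.sum_eq_single_of_mem (-m) (hmem (-m) hmE' (by omega) (by simp))
            (fun b _ hb => z1 b hb), e1,
          Finset.sum_eq_zero (fun b hb => z4 b (fun h => hnotmem b (by omega) hb)), add_zero]
      · exact absurd h0 hmne
      · rw [Finset.sum_eq_zero (fun b hb => z1 b (fun h => hnotmem b (by omega) hb)),
          Finset.sum_eq_single_of_mem m (hmem m hm h0 (by simp)) (fun b _ hb => z4 b hb), e4,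
          zero_add]
    have hd2 : ∑ j ∈ s, ccoef E ((N : ℤ) * k - j) m • pOp E j f
        + ∑ j ∈ s, ccoef E ((N : ℤ) * k + j) m • pOp E (-j) f = v := by
      rcases lt_trichotomy ((N : ℤ) * k + m) 0 with h0 | h0 | h0
      · rw [Finset.sum_eq_zero (fun b hb => z2 b (fun h => hnotmem b (by omega) hb)),
          Finset.sum_eq_single_of_mem (-((N : ℤ) * k + m))
            (hmem _ ((hEneg _).mp hm2) (by omega) (by simp)) (fun b _ hb => z3 b hb), e3,
          zero_add]
      · exact absurd h0 hm2ne
      · rw [Finset.sum_eq_single_of_mem ((N : ℤ) * k + m) (hmem _ hm2 h0 (by simp))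
            (fun b _ hb => z2 b hb), e2,
          Finset.sum_eq_zero (fun b hb => z3 b (fun h => hnotmem b (by omega) hb)), add_zero]
    -- assemble
    rw [rep1, rep2]
    have hre : ∀ a b c d : Rng E, ((a + b) + c) + d = (a + d) + (b + c) := by
      intro a b c d; abel
    have hptw : ∑ j ∈ s, Tm N E k j (pOp E m f)
        = ∑ j ∈ s, pOp E m (Tm N E k j f) + (v + v) := by
      rw [Finset.sum_congr rfl (fun j _ => Tm_pOp hEneg k m j f)]
      rw [Finset.sum_add_distrib]
      congr 1
      rw [Finset.sum_add_distrib, Finset.sum_add_distrib, Finset.sum_add_distrib]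
      rw [hre, hd1, hd2]
    rw [hptw, smul_add, map_smul, map_sum]
    congr 1
    rw [hv]
    push_cast
    rw [← two_smul ℂ, smul_smul]
    norm_num
  · have h1 : pOp E m = 0 := pOp_not_memE hEneg hm
    have h2 : pOp E ((N : ℤ) * k + m) = 0 := by
      apply pOp_not_memE hEneg
      intro h
      apply hm
      have := Eshift hEneg hEadd (-k) h
      have he : (N : ℤ) * k + m + (N : ℤ) * (-k) = m := by ring
      rwa [he] at this
    simp [h1, h2, LOp_zero]

end LemA
-- ## Lemma B and support helpers

section LemB
variable {N : ℕ} {E : Set ℤ}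
  (hEneg : ∀ j : ℤ, j ∈ E ↔ -j ∈ E)
  (hEdvd : ∀ j ∈ E, ¬ ((N : ℤ) ∣ j))
  (hEadd : ∀ j ∈ E, j + (N : ℤ) ∈ E)

include hEneg hEdvd hEadd in
lemma LOp_pOp_pOp (k a b : ℤ) (f : Rng E) :
    LOp N E k (pOp E a (pOp E b f))
      = pOp E a (pOp E b (LOp N E k f))
        + (-(b : ℂ)) • pOp E a (pOp E ((N : ℤ) * k + b) f)
        + (-(a : ℂ)) • pOp E ((N : ℤ) * k + a) (pOp E b f) := by
  rw [LOp_pOp hEneg hEdvd hEadd k a (pOp E b f), LOp_pOp hEneg hEdvd hEadd k b f,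
    map_add, map_smul]

end LemB

/-- bounding set for the support of `i ↦ pOp (m-i) (pOp i f)` -/
noncomputable def phiA {E : Set ℤ} (m : ℤ) (f : Rng E) : Finset ℤ :=
  varF f ∪ (varF f).image (fun v => m - v) ∪ Finset.Icc (-|m|) |m|

lemma phi_mem_A {E : Set ℤ} {m : ℤ} (hm : m ≠ 0) {f : Rng E} {i : ℤ}
    (h : pOp E (m - i) (pOp E i f) ≠ 0) : i ∈ phiA m f := by
  by_contra hA
  apply h
  have hIcc : i ∉ Finset.Icc (-|m|) |m| := fun hc =>
    hA (Finset.mem_union_right _ hc)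
  rw [Finset.mem_Icc] at hIcc
  push_neg at hIcc
  rcases lt_trichotomy i 0 with hi | hi | hi
  · -- i < 0 : then m - i > 0
    have hmi : 0 < m - i := by
      rcases lt_or_ge i (-|m|) with hc | hc
      · have := abs_nonneg m; have := neg_abs_le m; omega
      · have := hIcc hc; have := le_abs_self m; omega
    by_cases hiE : -i ∈ Epos E
    · have hrw : pOp E i (f) = pOp E (-(-i)) f := by rw [neg_neg]
      apply pOp_pos_zero hmi
      intro hv
      rw [hrw] at hv
      rcases varF_pOp_neg (-i) f (m - i) hv hiE with hc | hc
      · omega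
      · apply hA
        apply Finset.mem_union_left
        apply Finset.mem_union_right
        exact Finset.mem_image.mpr ⟨_, hc, by ring⟩
    · have hiE' : i ∉ Epos E := fun hc => absurd hc.2 (by omega)
      rw [pOp_none hiE' hiE]
      simp
  · subst hi
    rw [pOp_zero_idx, map_zero]
  · -- i > 0
    have : pOp E i f = 0 := by
      apply pOp_pos_zero hi
      intro hv
      exact hA (Finset.mem_union_left _ (Finset.mem_union_left _ hv))
    rw [this, map_zero]

lemma phi_mem_E {E : Set ℤ} (hEneg : ∀ j : ℤ, j ∈ E ↔ -j ∈ E) {m i : ℤ} {f : Rng E}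
    (h : pOp E (m - i) (pOp E i f) ≠ 0) : i ∈ E := by
  by_contra hiE
  exact h (by rw [pOp_not_memE hEneg hiE]; simp)

lemma sum_of_supp {M : Type*} [AddCommMonoid M] (t₁ t₂ : Finset ℤ) (ψ : ℤ → M)
    (h1 : ∀ i, ψ i ≠ 0 → i ∈ t₁) (h2 : ∀ i, ψ i ≠ 0 → i ∈ t₂) :
    ∑ i ∈ t₁, ψ i = ∑ i ∈ t₂, ψ i := by
  classical
  rw [← Finset.sum_subset (Finset.inter_subset_left (s₁ := t₁) (s₂ := t₂))
      (fun x hx hnx => ?_),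
    ← Finset.sum_subset (Finset.inter_subset_right (s₁ := t₁) (s₂ := t₂))
      (fun x hx hnx => ?_)]
  · by_contra hne
    exact hnx (Finset.mem_inter.mpr ⟨h1 x hne, hx⟩)
  · by_contra hne
    exact hnx (Finset.mem_inter.mpr ⟨hx, h2 x hne⟩)
/-- the big symmetric support set used in the main proof -/
noncomputable def phiB (N : ℕ) {E : Set ℤ} (k l : ℤ) (f : Rng E) : Finset ℤ :=
  (phiA ((N : ℤ) * k + (N : ℤ) * l) f
      ∪ (phiA ((N : ℤ) * k + (N : ℤ) * l) f).image
          (fun v => (N : ℤ) * k + (N : ℤ) * l - v))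
    ∪ ((phiA ((N : ℤ) * k + (N : ℤ) * l) f
      ∪ (phiA ((N : ℤ) * k + (N : ℤ) * l) f).image
          (fun v => (N : ℤ) * k + (N : ℤ) * l - v)).image Neg.neg)
    ∪ ((phiA ((N : ℤ) * k + (N : ℤ) * l) f
      ∪ (phiA ((N : ℤ) * k + (N : ℤ) * l) f).image
          (fun v => (N : ℤ) * k + (N : ℤ) * l - v)).image (fun v => v - (N : ℤ) * l))
    ∪ ((phiA ((N : ℤ) * k + (N : ℤ) * l) f
      ∪ (phiA ((N : ℤ) * k + (N : ℤ) * l) f).image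
          (fun v => (N : ℤ) * k + (N : ℤ) * l - v)).image (fun v => (N : ℤ) * l - v))

section Vanish
variable {N : ℕ} {E : Set ℤ}
  (hEneg : ∀ j : ℤ, j ∈ E ↔ -j ∈ E)
  (hEdvd : ∀ j ∈ E, ¬ ((N : ℤ) ∣ j))
  (hEadd : ∀ j ∈ E, j + (N : ℤ) ∈ E)

include hEneg hEdvd hEadd in
set_option maxHeartbeats 1000000 in
lemma Hvanish (k l : ℤ) (hm : (N : ℤ) * k + (N : ℤ) * l ≠ 0) (f : Rng E) (s : Finset ℤ)
    (hs1 : ↑s ⊆ Epos E)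
    (hsB : ∀ x : ℤ, x ∈ E → 0 < x → x ∈ phiB N k l f → x ∈ s) :
    ∑ j ∈ s,
      (((((j : ℤ) - (N : ℤ) * k : ℤ) : ℂ) • pOp E ((N : ℤ) * k + (N : ℤ) * l - j) (pOp E j f)
          + ((j : ℤ) : ℂ) • pOp E ((N : ℤ) * k - j) (pOp E ((N : ℤ) * l + j) f))
        + ((((-j : ℤ) - (N : ℤ) * k : ℤ) : ℂ)
              • pOp E ((N : ℤ) * k + (N : ℤ) * l - (-j)) (pOp E (-j) f)
          + (((-j : ℤ)) : ℂ) • pOp E ((N : ℤ) * k - (-j)) (pOp E ((N : ℤ) * l + (-j)) f)))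
      = 0 := by
  classical
  -- abbreviations (purely notational)
  have hmE : ∀ i : ℤ, pOp E ((N : ℤ) * k + (N : ℤ) * l - i) (pOp E i f) ≠ 0 → i ∈ E :=
    fun i h => phi_mem_E hEneg h
  have hφA' : ∀ i : ℤ, pOp E ((N : ℤ) * k + (N : ℤ) * l - i) (pOp E i f) ≠ 0 →
      i ∈ phiA ((N : ℤ) * k + (N : ℤ) * l) f
        ∪ (phiA ((N : ℤ) * k + (N : ℤ) * l) f).image
            (fun v => (N : ℤ) * k + (N : ℤ) * l - v) :=
    fun i h => Finset.mem_union_left _ (phi_mem_A hm h)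
  set m : ℤ := (N : ℤ) * k + (N : ℤ) * l with hmdef
  set A' : Finset ℤ := phiA m f ∪ (phiA m f).image (fun v => m - v) with hA'def
  have hA'inv : ∀ i ∈ A', m - i ∈ A' := by
    intro i hi
    rcases Finset.mem_union.mp hi with h | h
    · exact Finset.mem_union_right _ (Finset.mem_image.mpr ⟨i, h, rfl⟩)
    · obtain ⟨a, ha, rfl⟩ := Finset.mem_image.mp h
      refine Finset.mem_union_left _ ?_
      have he : m - (m - a) = a := by ring
      rwa [he]
  set u : Finset ℤ := s ∪ s.image Neg.neg with hu
  have hBsub : ∀ x ∈ A', x ∈ phiB N k l f := by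
    intro x hx
    exact Finset.mem_union_left _ (Finset.mem_union_left _ (Finset.mem_union_left _ hx))
  have hBneg : ∀ x ∈ A', -x ∈ phiB N k l f := by
    intro x hx
    exact Finset.mem_union_left _ (Finset.mem_union_left _ (Finset.mem_union_right _
      (Finset.mem_image.mpr ⟨x, hx, rfl⟩)))
  have hBsubl : ∀ x ∈ A', x - (N : ℤ) * l ∈ phiB N k l f := by
    intro x hx
    exact Finset.mem_union_left _ (Finset.mem_union_right _
      (Finset.mem_image.mpr ⟨x, hx, rfl⟩))
  have hBnegl : ∀ x ∈ A', (N : ℤ) * l - x ∈ phiB N k l f := by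
    intro x hx
    exact Finset.mem_union_right _ (Finset.mem_image.mpr ⟨x, hx, rfl⟩)
  have hmemu : ∀ i : ℤ, i ∈ E → i ∈ phiB N k l f → -i ∈ phiB N k l f → i ∈ u := by
    intro i hiE hiB hiB'
    rcases lt_trichotomy i 0 with h0 | h0 | h0
    · apply Finset.mem_union_right
      refine Finset.mem_image.mpr ⟨-i, ?_, by ring⟩
      exact hsB (-i) ((hEneg i).mp hiE) (by omega) hiB'
    · exact absurd h0 (Ene_zero hEdvd hiE)
    · exact Finset.mem_union_left _ (hsB i hiE h0 hiB)
  -- step 6 : sum over s of H j + H (-j) equals sum over u of H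
  have hdisj : Disjoint s (s.image Neg.neg) := by
    rw [Finset.disjoint_left]
    intro a ha hb
    obtain ⟨b, hbs, rfl⟩ := Finset.mem_image.mp hb
    have h1 := (hs1 ha).2
    have h2 := (hs1 hbs).2
    omega
  rw [Finset.sum_add_distrib]
  have himg : ∑ j ∈ s,
      ((((-j : ℤ) - (N : ℤ) * k : ℤ) : ℂ) • pOp E (m - (-j)) (pOp E (-j) f)
        + (((-j : ℤ)) : ℂ) • pOp E ((N : ℤ) * k - (-j)) (pOp E ((N : ℤ) * l + (-j)) f))
      = ∑ j ∈ s.image Neg.neg,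
      ((((j : ℤ) - (N : ℤ) * k : ℤ) : ℂ) • pOp E (m - j) (pOp E j f)
        + ((j : ℤ) : ℂ) • pOp E ((N : ℤ) * k - j) (pOp E ((N : ℤ) * l + j) f)) := by
    rw [Finset.sum_image (fun x _ y _ h => by omega)]
  rw [himg, ← Finset.sum_union hdisj, ← hu]
  -- step 7 : split the two halves
  rw [Finset.sum_add_distrib]
  -- step 8 : first half over A'
  have h8 : ∑ j ∈ u, (((j : ℤ) - (N : ℤ) * k : ℤ) : ℂ) • pOp E (m - j) (pOp E j f)
      = ∑ j ∈ A', (((j : ℤ) - (N : ℤ) * k : ℤ) : ℂ) • pOp E (m - j) (pOp E j f) := by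
    apply sum_of_supp
    · intro i hi
      have hne : pOp E (m - i) (pOp E i f) ≠ 0 := by
        intro h0; exact hi (by rw [h0, smul_zero])
      have hiA' := hφA' i hne
      exact hmemu i (hmE i hne) (hBsub i hiA') (hBneg i hiA')
    · intro i hi
      have hne : pOp E (m - i) (pOp E i f) ≠ 0 := by
        intro h0; exact hi (by rw [h0, smul_zero])
      exact hφA' i hne
  -- step 9 : second half over A' after reindexing
  have h9a : ∀ i : ℤ, ((i : ℤ) : ℂ) • pOp E ((N : ℤ) * k - i) (pOp E ((N : ℤ) * l + i) f)
      = ((((N : ℤ) * l + i : ℤ) - (N : ℤ) * l : ℤ) : ℂ)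
          • pOp E (m - ((N : ℤ) * l + i)) (pOp E ((N : ℤ) * l + i) f) := by
    intro i
    have hc : (((N : ℤ) * l + i : ℤ) - (N : ℤ) * l : ℤ) = i := by ring
    have hidx : m - ((N : ℤ) * l + i) = (N : ℤ) * k - i := by rw [hmdef]; ring
    rw [hc, hidx]
  have h9 : ∑ j ∈ u, ((j : ℤ) : ℂ) • pOp E ((N : ℤ) * k - j) (pOp E ((N : ℤ) * l + j) f)
      = ∑ j ∈ A', (((j : ℤ) - (N : ℤ) * l : ℤ) : ℂ) • pOp E (m - j) (pOp E j f) := by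
    rw [Finset.sum_congr rfl (fun j _ => h9a j)]
    have h9b : ∑ x ∈ u.image (fun i => (N : ℤ) * l + i),
        (((x : ℤ) - (N : ℤ) * l : ℤ) : ℂ) • pOp E (m - x) (pOp E x f)
        = ∑ i ∈ u, ((((N : ℤ) * l + i : ℤ) - (N : ℤ) * l : ℤ) : ℂ)
            • pOp E (m - ((N : ℤ) * l + i)) (pOp E ((N : ℤ) * l + i) f) :=
      Finset.sum_image (fun x _ y _ h => by omega)
    rw [← h9b]
    apply sum_of_supp
    · intro x hx
      have hne : pOp E (m - x) (pOp E x f) ≠ 0 := by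
        intro h0; exact hx (by rw [h0, smul_zero])
      have hxA' := hφA' x hne
      have hxE := hmE x hne
      refine Finset.mem_image.mpr ⟨x - (N : ℤ) * l, ?_, by ring⟩
      have hxE' : x - (N : ℤ) * l ∈ E := by
        have := Eshift hEneg hEadd (-l) hxE
        have he : x + (N : ℤ) * (-l) = x - (N : ℤ) * l := by ring
        rwa [he] at this
      have hng : -(x - (N : ℤ) * l) = (N : ℤ) * l - x := by ring
      apply hmemu _ hxE' (hBsubl x hxA')
      rw [hng]
      exact hBnegl x hxA'
    · intro x hx
      have hne : pOp E (m - x) (pOp E x f) ≠ 0 := by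
        intro h0; exact hx (by rw [h0, smul_zero])
      exact hφA' x hne
  rw [h8, h9, ← Finset.sum_add_distrib]
  -- step 10 : merge coefficients
  have h10 : ∀ j : ℤ, (((j : ℤ) - (N : ℤ) * k : ℤ) : ℂ) • pOp E (m - j) (pOp E j f)
      + (((j : ℤ) - (N : ℤ) * l : ℤ) : ℂ) • pOp E (m - j) (pOp E j f)
      = ((((j : ℤ) - (N : ℤ) * k : ℤ) : ℂ) + (((j : ℤ) - (N : ℤ) * l : ℤ) : ℂ))
          • pOp E (m - j) (pOp E j f) := fun j => (add_smul _ _ _).symm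
  rw [Finset.sum_congr rfl (fun j _ => h10 j)]
  -- step 11 : reflection
  have r1 : A'.image (fun v => m - v) = A' := by
    ext a
    constructor
    · intro ha
      obtain ⟨b, hb, rfl⟩ := Finset.mem_image.mp ha
      exact hA'inv b hb
    · intro ha
      exact Finset.mem_image.mpr ⟨m - a, hA'inv a ha, by ring⟩
  have hrefl : ∑ j ∈ A', ((((j : ℤ) - (N : ℤ) * k : ℤ) : ℂ) + (((j : ℤ) - (N : ℤ) * l : ℤ) : ℂ))
        • pOp E (m - j) (pOp E j f)
      = ∑ j ∈ A', ((((m - j : ℤ) - (N : ℤ) * k : ℤ) : ℂ)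
          + (((m - j : ℤ) - (N : ℤ) * l : ℤ) : ℂ)) • pOp E (m - j) (pOp E j f) := by
    conv_lhs => rw [← r1]
    rw [Finset.sum_image (fun x _ y _ h => by omega)]
    apply Finset.sum_congr rfl
    intro v hv
    have hidx : m - (m - v) = v := by ring
    rw [hidx]
    have hcomm : pOp E v (pOp E (m - v) f) = pOp E (m - v) (pOp E v f) :=
      pOp_comm hEneg (by omega) f
    rw [hcomm]
  have hzero : ∀ j : ℤ, ((((j : ℤ) - (N : ℤ) * k : ℤ) : ℂ) + (((j : ℤ) - (N : ℤ) * l : ℤ) : ℂ))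
        • pOp E (m - j) (pOp E j f)
      + ((((m - j : ℤ) - (N : ℤ) * k : ℤ) : ℂ) + (((m - j : ℤ) - (N : ℤ) * l : ℤ) : ℂ))
        • pOp E (m - j) (pOp E j f) = 0 := by
    intro j
    rw [← add_smul]
    convert zero_smul ℂ (pOp E (m - j) (pOp E j f)) using 2
    rw [hmdef]
    push_cast
    ring
  have hdouble : (2 : ℂ) • ∑ j ∈ A', ((((j : ℤ) - (N : ℤ) * k : ℤ) : ℂ)
        + (((j : ℤ) - (N : ℤ) * l : ℤ) : ℂ)) • pOp E (m - j) (pOp E j f) = 0 := by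
    rw [two_smul]
    nth_rewrite 2 [hrefl]
    rw [← Finset.sum_add_distrib, Finset.sum_congr rfl (fun j _ => hzero j),
      Finset.sum_const_zero]
  rcases smul_eq_zero.mp hdouble with hc | hc
  · norm_num at hc
  · exact hc

/-- For all integers `k`, `l` with `k + l ≠ 0`, one has
`L_k ∘ L_l - L_l ∘ L_k = N·(k-l)·L_{k+l}` as linear operators on `R`. -/
theorem virasoro_commutator_of_sum_ne_zero
    (N : ℕ) (hN : 0 < N) (E : Set ℤ)
    (hEneg : ∀ j : ℤ, j ∈ E ↔ -j ∈ E)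
    (hEdvd : ∀ j ∈ E, ¬ ((N : ℤ) ∣ j))
    (hEadd : ∀ j ∈ E, j + (N : ℤ) ∈ E)
    (k l : ℤ) (hkl : k + l ≠ 0) :
    ∀ f : Rng E,
      LOp N E k (LOp N E l f) - LOp N E l (LOp N E k f)
        = (((N : ℤ) * (k - l) : ℤ) : ℂ) • LOp N E (k + l) f := by
  intro f
  classical
  have hNne : (N : ℤ) ≠ 0 := by positivity
  have hm : (N : ℤ) * k + (N : ℤ) * l ≠ 0 := by
    intro h
    apply hkl
    have h2 : (N : ℤ) * (k + l) = 0 := by linarith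
    rcases mul_eq_zero.mp h2 with h3 | h3
    · exact absurd h3 hNne
    · exact h3
  set m : ℤ := (N : ℤ) * k + (N : ℤ) * l with hmdef
  set s : Finset ℤ :=
    (TS N l f ∪ TS N l (LOp N E k f) ∪ TS N (k + l) f ∪ phiB N k l f).filter
      (· ∈ Epos E) with hs
  have hs1 : ↑s ⊆ Epos E := fun x hx => (Finset.mem_filter.mp hx).2
  have hsB : ∀ x : ℤ, x ∈ E → 0 < x → x ∈ phiB N k l f → x ∈ s := by
    intro x hxE hx0 hxB
    exact Finset.mem_filter.mpr ⟨Finset.mem_union_right _ hxB, ⟨hxE, hx0⟩⟩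
  -- the three representations over s
  have rep_l : LOp N E l f = (2 : ℂ)⁻¹ • ∑ j ∈ s, Tm N E l j f := by
    apply LOp_eq_sum s hs1
    intro j hj hne
    exact Finset.mem_filter.mpr ⟨Finset.mem_union_left _ (Finset.mem_union_left _
      (Finset.mem_union_left _ (Tm_supp hj.2 hne))), hj⟩
  have rep_lk : LOp N E l (LOp N E k f)
      = (2 : ℂ)⁻¹ • ∑ j ∈ s, Tm N E l j (LOp N E k f) := by
    apply LOp_eq_sum s hs1
    intro j hj hne
    exact Finset.mem_filter.mpr ⟨Finset.mem_union_left _ (Finset.mem_union_left _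
      (Finset.mem_union_right _ (Tm_supp hj.2 hne))), hj⟩
  have rep_kl : LOp N E (k + l) f = (2 : ℂ)⁻¹ • ∑ j ∈ s, Tm N E (k + l) j f := by
    apply LOp_eq_sum s hs1
    intro j hj hne
    exact Finset.mem_filter.mpr ⟨Finset.mem_union_left _ (Finset.mem_union_right _
      (Tm_supp hj.2 hne)), hj⟩
  -- step 1 : expand L_k (L_l f)
  have step1 : LOp N E k (LOp N E l f)
      = (2 : ℂ)⁻¹ • ∑ j ∈ s, LOp N E k (Tm N E l j f) := by
    rw [rep_l]
    calc LOp N E k ((2 : ℂ)⁻¹ • ∑ j ∈ s, Tm N E l j f)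
        = LOpL N E k ((2 : ℂ)⁻¹ • ∑ j ∈ s, Tm N E l j f) := rfl
      _ = (2 : ℂ)⁻¹ • ∑ j ∈ s, LOpL N E k (Tm N E l j f) := by
          rw [map_smul, map_sum]
      _ = (2 : ℂ)⁻¹ • ∑ j ∈ s, LOp N E k (Tm N E l j f) := rfl
  -- step 2 : pointwise commutation
  have step2 : ∀ j : ℤ, LOp N E k (Tm N E l j f)
      = Tm N E l j (LOp N E k f)
        + (((j - (N : ℤ) * l : ℤ) : ℂ) • pOp E (m - j) (pOp E j f)
          + (-(j : ℂ)) • pOp E ((N : ℤ) * l - j) (pOp E ((N : ℤ) * k + j) f)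
          + (j : ℂ) • pOp E ((N : ℤ) * k - j) (pOp E ((N : ℤ) * l + j) f)
          + (-((N : ℤ) * l + j : ℤ) : ℂ) • pOp E (-j) (pOp E (m + j) f)) := by
    intro j
    simp only [Tm]
    rw [LOp_add, LOp_pOp_pOp hEneg hEdvd hEadd k ((N : ℤ) * l - j) j f,
      LOp_pOp_pOp hEneg hEdvd hEadd k (-j) ((N : ℤ) * l + j) f]
    have i1 : (N : ℤ) * k + ((N : ℤ) * l - j) = m - j := by rw [hmdef]; ring
    have i2 : (N : ℤ) * k + ((N : ℤ) * l + j) = m + j := by rw [hmdef]; ring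
    have i3 : (N : ℤ) * k + -j = (N : ℤ) * k - j := by ring
    rw [i1, i2, i3]
    push_cast
    module
  -- step 5 : pointwise identity for the corrector
  have step5 : ∀ j : ℤ,
      (((j - (N : ℤ) * l : ℤ) : ℂ) • pOp E (m - j) (pOp E j f)
        + (-(j : ℂ)) • pOp E ((N : ℤ) * l - j) (pOp E ((N : ℤ) * k + j) f)
        + (j : ℂ) • pOp E ((N : ℤ) * k - j) (pOp E ((N : ℤ) * l + j) f)
        + (-((N : ℤ) * l + j : ℤ) : ℂ) • pOp E (-j) (pOp E (m + j) f))
      - (((N : ℤ) * (k - l) : ℤ) : ℂ) • Tm N E (k + l) j f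
      = ((((j : ℤ) - (N : ℤ) * k : ℤ) : ℂ) • pOp E (m - j) (pOp E j f)
          + ((j : ℤ) : ℂ) • pOp E ((N : ℤ) * k - j) (pOp E ((N : ℤ) * l + j) f))
        + ((((-j : ℤ) - (N : ℤ) * k : ℤ) : ℂ) • pOp E (m - (-j)) (pOp E (-j) f)
          + (((-j : ℤ)) : ℂ) • pOp E ((N : ℤ) * k - (-j)) (pOp E ((N : ℤ) * l + (-j)) f)) := by
    intro j
    have hm' : (N : ℤ) * k + (N : ℤ) * l ≠ 0 := by rw [← hmdef]; exact hm
    rw [Tm]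
    have i4 : (N : ℤ) * (k + l) - j = m - j := by rw [hmdef]; ring
    have i5 : (N : ℤ) * (k + l) + j = m + j := by rw [hmdef]; ring
    rw [i4, i5]
    have c1 : pOp E (m - (-j)) (pOp E (-j) f) = pOp E (-j) (pOp E (m + j) f) := by
      have he : m - (-j) = m + j := by ring
      rw [he]
      exact pOp_comm hEneg (by rw [hmdef]; omega) f
    have c2 : pOp E ((N : ℤ) * k - (-j)) (pOp E ((N : ℤ) * l + (-j)) f)
        = pOp E ((N : ℤ) * l - j) (pOp E ((N : ℤ) * k + j) f) := by
      have e1 : (N : ℤ) * k - (-j) = (N : ℤ) * k + j := by ring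
      have e2 : (N : ℤ) * l + (-j) = (N : ℤ) * l - j := by ring
      rw [e1, e2]
      exact pOp_comm hEneg (by omega) f
    rw [c1, c2]
    push_cast
    module
  -- the vanishing of the corrector sum
  have hvanish : ∑ j ∈ s,
      (((((j : ℤ) - (N : ℤ) * k : ℤ) : ℂ) • pOp E (m - j) (pOp E j f)
          + ((j : ℤ) : ℂ) • pOp E ((N : ℤ) * k - j) (pOp E ((N : ℤ) * l + j) f))
        + ((((-j : ℤ) - (N : ℤ) * k : ℤ) : ℂ) • pOp E (m - (-j)) (pOp E (-j) f)
          + (((-j : ℤ)) : ℂ) • pOp E ((N : ℤ) * k - (-j)) (pOp E ((N : ℤ) * l + (-j)) f)))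
      = 0 := by
    have hm' : (N : ℤ) * k + (N : ℤ) * l ≠ 0 := by rw [← hmdef]; exact hm
    rw [hmdef]
    exact Hvanish hEneg hEdvd hEadd k l hm' f s hs1 hsB
  -- assemble
  have key : ∑ j ∈ s,
      (((j - (N : ℤ) * l : ℤ) : ℂ) • pOp E (m - j) (pOp E j f)
        + (-(j : ℂ)) • pOp E ((N : ℤ) * l - j) (pOp E ((N : ℤ) * k + j) f)
        + (j : ℂ) • pOp E ((N : ℤ) * k - j) (pOp E ((N : ℤ) * l + j) f)
        + (-((N : ℤ) * l + j : ℤ) : ℂ) • pOp E (-j) (pOp E (m + j) f))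
      = ∑ j ∈ s, (((N : ℤ) * (k - l) : ℤ) : ℂ) • Tm N E (k + l) j f := by
    rw [← sub_eq_zero, ← Finset.sum_sub_distrib]
    rw [Finset.sum_congr rfl (fun j _ => step5 j)]
    exact hvanish
  rw [step1, rep_lk, Finset.sum_congr rfl (fun j _ => step2 j), Finset.sum_add_distrib,
    smul_add, add_sub_cancel_left, key, rep_kl, ← Finset.smul_sum, smul_comm]
end Vanish
end
end

section
/- Let n ≥ 1, let L = sl_{n+1}(ℂ[λ,λ⁻¹]) be the Lie algebra of (n+1)×(n+1) trace-zero matrices over ℂ[λ,λ⁻¹] with the commutator bracket, and let Λ = Σ_{i=1}^{n} E_{i+1,i} + λ·E_{1,n+1} (so Λ^{n+1} = λ·I and Λ^j is defined for all j ∈ ℤ). Then: (i) the centralizer Z = {X ∈ L : [Λ, X] = 0} equals the ℂ-linear span of {Λ^j : j ∈ ℤ, (n+1) ∤ j}; (ii) L decomposes as the internal direct sum of ℂ-vector spaces L = Z ⊕ [Λ, L], where [Λ, L] = {[Λ, Y] : Y ∈ L}. -/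
/-!
The decomposition `L = Z ⊕ [Λ, L]` of `L = sl_{n+1}(ℂ[λ,λ⁻¹])`, where
`Λ = Σ_{i=1}^{n} E_{i+1,i} + λ·E_{1,n+1}` is the principal cyclic element and
`Z` is its centralizer, which is spanned by the powers `Λ^j` with `(n+1) ∤ j`.
`L` is formalized as the kernel of the trace on `gl_{n+1}(ℂ[λ,λ⁻¹])`, `ad_Λ` as
the ℂ-linear map `X ↦ ΛX - XΛ`, and integer powers `Λ^j` via a unit `u` with
`↑u = Λ`.
-/

open LaurentPolynomial

noncomputable section

/-- The principal cyclic element `Λ = Σ_{i=1}^{n} E_{i+1,i} + λ·E_{1,n+1}`. -/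
noncomputable def LamA (n : ℕ) : Matrix (Fin (n + 1)) (Fin (n + 1)) (LaurentPolynomial ℂ) :=
  Matrix.of fun i j =>
    if (i : ℕ) = (j : ℕ) + 1 then 1
    else if (i : ℕ) = 0 ∧ (j : ℕ) = n then T 1 else 0

/-- The ℂ-linear map `ad_Λ : X ↦ ΛX - XΛ` on `gl_{n+1}(ℂ[λ,λ⁻¹])`. -/
noncomputable def adLam (n : ℕ) :
    Matrix (Fin (n + 1)) (Fin (n + 1)) (LaurentPolynomial ℂ) →ₗ[ℂ]
      Matrix (Fin (n + 1)) (Fin (n + 1)) (LaurentPolynomial ℂ) :=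
  LinearMap.mulLeft ℂ (LamA n) - LinearMap.mulRight ℂ (LamA n)

/-- `sl_{n+1}(ℂ[λ,λ⁻¹])`: trace-zero matrices, as a ℂ-subspace of `gl_{n+1}`. -/
noncomputable def slSub (n : ℕ) :
    Submodule ℂ (Matrix (Fin (n + 1)) (Fin (n + 1)) (LaurentPolynomial ℂ)) :=
  LinearMap.ker (Matrix.traceLinearMap (Fin (n + 1)) ℂ (LaurentPolynomial ℂ))

variable {n : ℕ}

def wA (n : ℕ) (a : Fin (n+1)) : LaurentPolynomial ℂ := if a = 0 then T 1 else 1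

variable {n : ℕ}

lemma lam_apply (a b : Fin (n+1)) :
    LamA n a b = if a = b + 1 then wA n a else 0 := by
  have hb : ((b + 1 : Fin (n+1)) : ℕ) = if b = Fin.last n then 0 else (b:ℕ) + 1 :=
    Fin.val_add_one b
  have hab : a = b + 1 ↔ (a:ℕ) = ((b+1 : Fin (n+1)):ℕ) := by
    rw [Fin.ext_iff]
  have hbl : b = Fin.last n ↔ (b:ℕ) = n := by rw [Fin.ext_iff]; rfl
  have ha0 : a = 0 ↔ (a:ℕ) = 0 := by rw [Fin.ext_iff]; rfl
  have hav := a.isLt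
  have hbv := b.isLt
  simp only [LamA, Matrix.of_apply, wA]
  by_cases h1 : (a:ℕ) = (b:ℕ) + 1
  · rw [if_pos h1]
    have hbn : ¬ b = Fin.last n := by rw [hbl]; omega
    rw [if_pos (by rw [hab, hb, if_neg hbn, h1]), if_neg (by rw [ha0]; omega)]
  · rw [if_neg h1]
    by_cases h2 : (a:ℕ) = 0 ∧ (b:ℕ) = n
    · rw [if_pos h2]
      have hbn : b = Fin.last n := by rw [hbl]; exact h2.2
      rw [if_pos (by rw [hab, hb, if_pos hbn]; exact h2.1), if_pos (by rw [ha0]; exact h2.1)]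
    · rw [if_neg h2, if_neg]
      rw [hab, hb]
      split
      · omega
      · omega

lemma mul_lam_left (X : Matrix (Fin (n+1)) (Fin (n+1)) (LaurentPolynomial ℂ))
    (a b : Fin (n+1)) : (LamA n * X) a b = wA n a * X (a - 1) b := by
  rw [Matrix.mul_apply]
  rw [Finset.sum_eq_single (a - 1)]
  · rw [lam_apply, if_pos (by rw [sub_add_cancel])]
  · intro c _ hc
    rw [lam_apply, if_neg, zero_mul]
    intro h; exact hc (by rw [h, add_sub_cancel_right])
  · simp

lemma mul_lam_right (X : Matrix (Fin (n+1)) (Fin (n+1)) (LaurentPolynomial ℂ))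
    (a b : Fin (n+1)) : (X * LamA n) a b = X a (b + 1) * wA n (b + 1) := by
  rw [Matrix.mul_apply]
  rw [Finset.sum_eq_single (b + 1)]
  · rw [lam_apply, if_pos rfl]
  · intro c _ hc
    rw [lam_apply, if_neg, mul_zero]
    intro h; exact hc h
  · simp

lemma dvd_small {N x : ℤ} (hN : 0 < N) (hx1 : -N < x) (hx2 : x < N) (h : N ∣ x) : x = 0 := by
  rcases h with ⟨t, rfl⟩
  rcases lt_trichotomy t 0 with h | h | h
  · nlinarith
  · simp [h]
  · nlinarith

def MonM (n : ℕ) (j : ℤ) : Matrix (Fin (n + 1)) (Fin (n + 1)) (LaurentPolynomial ℂ) :=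
  Matrix.of fun a b =>
    if ((a:ℤ) - (b:ℤ) - j) % ((n:ℤ)+1) = 0 then T ((j - ((a:ℤ) - (b:ℤ))) / ((n:ℤ)+1)) else 0

lemma MonM_apply (j : ℤ) (a b : Fin (n+1)) :
    MonM n j a b =
    if ((n:ℤ)+1) ∣ ((a:ℤ) - (b:ℤ) - j) then T ((j - ((a:ℤ) - (b:ℤ))) / ((n:ℤ)+1)) else 0 := by
  simp only [MonM, Matrix.of_apply, ← Int.dvd_iff_emod_eq_zero]

lemma MonM_zero : MonM n 0 = 1 := by
  ext a b
  rw [MonM_apply, Matrix.one_apply]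
  have ha := a.isLt; have hb := b.isLt
  by_cases h : a = b
  · subst h; rw [if_pos (by simp), if_pos rfl]; simp
  · rw [if_neg, if_neg h]
    have hne : (a:ℤ) ≠ (b:ℤ) := fun hc => h (Fin.ext (by exact_mod_cast hc))
    intro hd
    have := dvd_small (N := (n:ℤ)+1) (by omega) (by omega) (by omega) hd
    omega

lemma lam_mul_Mon (hn : 1 ≤ n) (j : ℤ) : LamA n * MonM n j = MonM n (j + 1) := by
  apply Matrix.ext; intro a b
  rw [mul_lam_left, MonM_apply, MonM_apply]
  have hb := b.isLt
  by_cases h : a = 0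
  · subst h
    have h1 : ((0 - 1 : Fin (n+1)) : ℕ) = n := by rw [Fin.coe_sub_one, if_pos rfl]
    rw [wA, if_pos rfl, h1]
    simp only [Fin.val_zero, Nat.cast_zero]
    have hd : ((n:ℤ)+1) ∣ ((n:ℤ) - b - j) ↔ ((n:ℤ)+1) ∣ ((0:ℤ) - b - (j+1)) := by
      constructor <;> intro ⟨t, ht⟩
      · exact ⟨t - 1, by push_cast; linarith⟩
      · exact ⟨t + 1, by push_cast; linarith⟩
    push_cast
    by_cases h2 : ((n:ℤ)+1) ∣ ((n:ℤ) - b - j)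
    · rw [if_pos h2, if_pos (by push_cast at hd ⊢; exact hd.mp h2)]
      obtain ⟨t, ht⟩ := h2
      have e1 : j - ((n:ℤ) - b) = ((n:ℤ)+1) * (-t) := by linarith
      have e2 : j + 1 - ((0:ℤ) - b) = ((n:ℤ)+1) * (-t + 1) := by linarith
      rw [e1, e2, Int.mul_ediv_cancel_left _ (by omega), Int.mul_ediv_cancel_left _ (by omega),
        ← T_add]
      ring_nf
    · rw [if_neg h2, if_neg (by push_cast at hd ⊢; exact fun hc => h2 (hd.mpr hc)), mul_zero]
  · have h1 : ((a - 1 : Fin (n+1)) : ℕ) = (a:ℕ) - 1 := by rw [Fin.coe_sub_one, if_neg h]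
    have ha0 : 1 ≤ (a:ℕ) := by
      rcases Nat.eq_zero_or_pos (a:ℕ) with h' | h'
      · exact absurd (Fin.ext h') h
      · omega
    rw [wA, if_neg h, h1, one_mul]
    have hcast : (((a:ℕ) - 1 : ℕ) : ℤ) = (a:ℤ) - 1 := by omega
    rw [hcast]
    have hcond : (a:ℤ) - 1 - b - j = (a:ℤ) - b - (j+1) := by ring
    have hval : j - ((a:ℤ) - 1 - b) = j + 1 - ((a:ℤ) - b) := by ring
    rw [hcond, hval]

lemma Mon_mul_lam (hn : 1 ≤ n) (j : ℤ) : MonM n j * LamA n = MonM n (j + 1) := by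
  apply Matrix.ext; intro a b
  rw [mul_lam_right, MonM_apply, MonM_apply]
  have ha := a.isLt
  by_cases h : b = Fin.last n
  · have h1 : ((b + 1 : Fin (n+1)) : ℕ) = 0 := by rw [Fin.val_add_one, if_pos h]
    have hb0 : (b + 1 : Fin (n+1)) = 0 := Fin.ext h1
    have hbn : (b:ℕ) = n := by rw [h]; rfl
    rw [wA, if_pos hb0, h1, hbn]
    simp only [Fin.val_zero, Nat.cast_zero]
    have hd : ((n:ℤ)+1) ∣ ((a:ℤ) - 0 - j) ↔ ((n:ℤ)+1) ∣ ((a:ℤ) - n - (j+1)) := by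
      constructor <;> intro ⟨t, ht⟩
      · exact ⟨t - 1, by push_cast; linarith⟩
      · exact ⟨t + 1, by push_cast; linarith⟩
    push_cast
    by_cases h2 : ((n:ℤ)+1) ∣ ((a:ℤ) - 0 - j)
    · rw [if_pos (by push_cast at h2; exact h2), if_pos (by push_cast at hd ⊢; exact hd.mp h2)]
      obtain ⟨t, ht⟩ := h2
      have e1 : j - ((a:ℤ) - 0) = ((n:ℤ)+1) * (-t) := by linarith
      have e2 : j + 1 - ((a:ℤ) - n) = ((n:ℤ)+1) * (-t + 1) := by linarith
      push_cast at e1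
      rw [e1, e2, Int.mul_ediv_cancel_left _ (by omega), Int.mul_ediv_cancel_left _ (by omega),
        ← T_add]
    · rw [if_neg (by push_cast at h2 ⊢; exact h2),
        if_neg (by push_cast at hd ⊢; exact fun hc => h2 (hd.mpr hc)), zero_mul]
  · have h1 : ((b + 1 : Fin (n+1)) : ℕ) = (b:ℕ) + 1 := by rw [Fin.val_add_one, if_neg h]
    have hb0 : ¬ (b + 1 : Fin (n+1)) = 0 := by
      intro hc
      have := congrArg Fin.val hc
      rw [h1, Fin.val_zero] at this
      omega
    rw [wA, if_neg hb0, h1, mul_one]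
    have hcast : (((b:ℕ) + 1 : ℕ) : ℤ) = (b:ℤ) + 1 := by push_cast; ring
    rw [hcast]
    have hcond : (a:ℤ) - ((b:ℤ)+1) - j = (a:ℤ) - b - (j+1) := by ring
    have hval : j - ((a:ℤ) - ((b:ℤ)+1)) = j + 1 - ((a:ℤ) - b) := by ring
    rw [hcond, hval]

lemma Mon_mul_inv (hn : 1 ≤ n) (j : ℤ) : MonM n j * MonM n (-1) = MonM n (j - 1) := by
  have h1 : MonM n (j - 1) * LamA n = MonM n j := by rw [Mon_mul_lam hn]; ring_nf
  have h2 : LamA n * MonM n (-1) = 1 := by rw [lam_mul_Mon hn]; norm_num [MonM_zero]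
  rw [← h1, mul_assoc, h2, mul_one]

lemma exists_unit (hn : 1 ≤ n) :
    ∃ u : (Matrix (Fin (n + 1)) (Fin (n + 1)) (LaurentPolynomial ℂ))ˣ,
      (u : Matrix (Fin (n + 1)) (Fin (n + 1)) (LaurentPolynomial ℂ)) = LamA n ∧
      ∀ j : ℤ, ((u ^ j : (Matrix (Fin (n + 1)) (Fin (n + 1)) (LaurentPolynomial ℂ))ˣ) :
          Matrix (Fin (n + 1)) (Fin (n + 1)) (LaurentPolynomial ℂ)) = MonM n j := by
  have h2 : LamA n * MonM n (-1) = 1 := by rw [lam_mul_Mon hn]; norm_num [MonM_zero]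
  have h3 : MonM n (-1) * LamA n = 1 := by rw [Mon_mul_lam hn]; norm_num [MonM_zero]
  refine ⟨⟨LamA n, MonM n (-1), h2, h3⟩, rfl, ?_⟩
  intro j
  induction j using Int.induction_on with
  | zero => simp [MonM_zero]
  | succ k ih =>
    rw [zpow_add_one, Units.val_mul, ih]
    exact Mon_mul_lam hn k
  | pred k ih =>
    rw [zpow_sub_one, Units.val_mul, ih]
    exact Mon_mul_inv hn (-(k:ℤ))

lemma T_smul_Mon (m j : ℤ) :
    T (R := ℂ) m • MonM n j = MonM n (j + ((n:ℤ)+1) * m) := by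
  apply Matrix.ext; intro a b
  rw [Matrix.smul_apply, MonM_apply, MonM_apply, smul_eq_mul]
  by_cases h : ((n:ℤ)+1) ∣ ((a:ℤ) - (b:ℤ) - j)
  · rw [if_pos h, if_pos (by obtain ⟨t, ht⟩ := h; exact ⟨t - m, by linarith [ht]⟩)]
    rw [← T_add]
    congr 1
    rw [show (j + ((n:ℤ)+1) * m - ((a:ℤ) - b)) = (j - ((a:ℤ) - b)) + ((n:ℤ)+1) * m by ring,
      Int.add_mul_ediv_left _ _ (by omega)]
    ring
  · rw [if_neg h, if_neg, mul_zero]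
    intro hc
    exact h (by obtain ⟨t, ht⟩ := hc; exact ⟨t + m, by linarith [ht]⟩)

lemma trace_Mon_not_dvd {j : ℤ} (h : ¬ ((n:ℤ)+1) ∣ j) : Matrix.trace (MonM n j) = 0 := by
  rw [Matrix.trace]
  apply Finset.sum_eq_zero
  intro a _
  rw [Matrix.diag_apply, MonM_apply, if_neg]
  intro hc
  exact h (by obtain ⟨t, ht⟩ := hc; exact ⟨-t, by linarith [ht]⟩)

lemma trace_Mon_zero' : Matrix.trace (MonM n 0) = ((n:ℕ) + 1 : LaurentPolynomial ℂ) := by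
  rw [MonM_zero, Matrix.trace_one]
  simp

lemma adLam_apply (X : Matrix (Fin (n+1)) (Fin (n+1)) (LaurentPolynomial ℂ)) :
    adLam n X = LamA n * X - X * LamA n := by
  simp [adLam, LinearMap.sub_apply, LinearMap.mulLeft_apply, LinearMap.mulRight_apply]

lemma adLam_smul (r : LaurentPolynomial ℂ) (X : Matrix (Fin (n+1)) (Fin (n+1)) (LaurentPolynomial ℂ)) :
    adLam n (r • X) = r • adLam n X := by
  rw [adLam_apply, adLam_apply, Matrix.mul_smul, Matrix.smul_mul, smul_sub]

lemma adLam_Mon (hn : 1 ≤ n) (j : ℤ) : adLam n (MonM n j) = 0 := by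
  rw [adLam_apply, lam_mul_Mon hn, Mon_mul_lam hn, sub_self]

lemma lam_mul_diag (e : Fin (n+1) → LaurentPolynomial ℂ) :
    LamA n * Matrix.diagonal e = Matrix.diagonal (fun a => e (a - 1)) * LamA n := by
  apply Matrix.ext; intro a b
  have hL : (LamA n * Matrix.diagonal e) a b = LamA n a b * e b := by
    rw [Matrix.mul_apply, Finset.sum_eq_single b]
    · rw [Matrix.diagonal_apply_eq]
    · intro c _ hc
      rw [Matrix.diagonal_apply_ne _ hc, mul_zero]
    · simp
  rw [hL, Matrix.diagonal_mul, lam_apply]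
  by_cases hab : a = b + 1
  · have h1 : a - 1 = b := by rw [hab, add_sub_cancel_right]
    rw [if_pos hab, h1]
    ring
  · rw [if_neg hab, zero_mul, mul_zero]

lemma adLam_diag_Mon (hn : 1 ≤ n) (e : Fin (n+1) → LaurentPolynomial ℂ) (j : ℤ) :
    adLam n (Matrix.diagonal e * MonM n j)
      = (Matrix.diagonal (fun a => e (a - 1)) - Matrix.diagonal e) * MonM n (j + 1) := by
  rw [adLam_apply, ← mul_assoc, lam_mul_diag, mul_assoc, lam_mul_Mon hn,
    mul_assoc, Mon_mul_lam hn, sub_mul]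

lemma Mon_mul_Mon (hn : 1 ≤ n) (i j : ℤ) : MonM n i * MonM n j = MonM n (i + j) := by
  obtain ⟨u, -, hu⟩ := exists_unit hn
  rw [← hu i, ← hu j, ← hu (i + j), ← Units.val_mul, ← zpow_add]

lemma fin_sub_dvd (a b : Fin (n+1)) :
    ((n:ℤ)+1) ∣ ((a:ℤ) - (b:ℤ) - ((a - b : Fin (n+1)) : ℤ)) := by
  have h : ((a - b : Fin (n+1)) : ℕ) = ((n+1) - (b:ℕ) + (a:ℕ)) % (n+1) := by
    rw [Fin.sub_def]
  have hkey := Nat.mod_add_div ((n+1) - (b:ℕ) + (a:ℕ)) (n+1)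
  set q := ((n+1) - (b:ℕ) + (a:ℕ)) / (n+1) with hq
  have hb := b.isLt
  have hnat : ((a - b : Fin (n+1)) : ℕ) + (n+1) * q = (n+1) - (b:ℕ) + (a:ℕ) := by
    rw [h]; exact hkey
  have he : (((a - b : Fin (n+1)) : ℕ) : ℤ) + ((n:ℤ)+1) * q = ((n:ℤ)+1) - b + a := by
    have := congrArg (Nat.cast : ℕ → ℤ) hnat
    push_cast [Nat.cast_sub (le_of_lt hb)] at this
    linarith [this]
  exact ⟨(q:ℤ) - 1, by linear_combination -he⟩

lemma Mon_ne_apply {j : ℤ} {a b : Fin (n+1)} (h : ¬ ((n:ℤ)+1) ∣ ((a:ℤ) - (b:ℤ) - j)) :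
    MonM n j a b = 0 := by rw [MonM_apply, if_neg h]

/-- central matrices are determined by column 0 -/
lemma central_eq (hn : 1 ≤ n) (X : Matrix (Fin (n+1)) (Fin (n+1)) (LaurentPolynomial ℂ))
    (hX : adLam n X = 0) :
    X = ∑ k : Fin (n+1), X k 0 • MonM n (k : ℤ) := by
  set Y := X - ∑ k : Fin (n+1), X k 0 • MonM n (k : ℤ) with hY
  have hYad : adLam n Y = 0 := by
    rw [hY, map_sub, hX, map_sum, zero_sub, neg_eq_zero]
    apply Finset.sum_eq_zero
    intro k _
    rw [adLam_smul, adLam_Mon hn, smul_zero]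
  have hYcol : ∀ a : Fin (n+1), Y a 0 = 0 := by
    intro a
    have hsum : (∑ k : Fin (n+1), X k 0 • MonM n (k : ℤ)) a 0 = X a 0 := by
      rw [Matrix.sum_apply]
      rw [Finset.sum_eq_single a]
      · rw [Matrix.smul_apply, MonM_apply, if_pos (by simp), smul_eq_mul]
        simp
      · intro k _ hk
        rw [Matrix.smul_apply, Mon_ne_apply, smul_zero]
        intro hc
        simp only [Fin.val_zero, Nat.cast_zero] at hc
        have hkb := k.isLt; have hab := a.isLt
        have := dvd_small (N := (n:ℤ)+1) (by omega) (by omega) (by omega) hc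
        exact hk (Fin.ext (by omega))
      · simp
    rw [hY, Matrix.sub_apply, hsum, sub_self]
  have hrel : ∀ a b : Fin (n+1), wA n a * Y (a-1) b = Y a (b+1) * wA n (b+1) := by
    intro a b
    have h0 : LamA n * Y - Y * LamA n = 0 := by rw [← adLam_apply, hYad]
    have h1 : (LamA n * Y) a b = (Y * LamA n) a b := by
      rw [sub_eq_zero] at h0; rw [h0]
    rwa [mul_lam_left, mul_lam_right] at h1
  have hkey : ∀ m : ℕ, ∀ _hm : m ≤ n, ∀ a : Fin (n+1), Y a ⟨m, by omega⟩ = 0 := by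
    intro m
    induction m with
    | zero => intro _ a; exact hYcol a
    | succ m ih =>
      intro hm a
      have hmn : m ≤ n := by omega
      have hb1 : ((⟨m, by omega⟩ : Fin (n+1)) + 1) = ⟨m+1, by omega⟩ := by
        apply Fin.ext
        rw [Fin.val_add_one, if_neg]
        intro hc
        have := congrArg Fin.val hc
        simp [Fin.val_last] at this
        omega
      have hb0 : ¬ ((⟨m+1, by omega⟩ : Fin (n+1)) = 0) := by
        intro hc
        have := congrArg Fin.val hc
        simp at this
      have := hrel a ⟨m, by omega⟩
      rw [hb1, ih hmn, mul_zero, wA, if_neg hb0, mul_one] at this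
      exact this.symm
  have hY0 : Y = 0 := by
    apply Matrix.ext; intro a b
    have := hkey (b:ℕ) (by omega) a
    simpa [Fin.eta] using this
  rw [← sub_eq_zero]
  exact hY0

lemma gradeD (X : Matrix (Fin (n+1)) (Fin (n+1)) (LaurentPolynomial ℂ)) :
    ∑ k : Fin (n+1), Matrix.diagonal (fun a => (X * MonM n (-(k:ℤ))) a a) * MonM n (k:ℤ) = X := by
  apply Matrix.ext; intro a b
  rw [Matrix.sum_apply]
  have hab := fin_sub_dvd a b
  have ha := a.isLt; have hb := b.isLt
  rw [Finset.sum_eq_single (a - b)]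
  · rw [Matrix.diagonal_mul]
    have hin : (X * MonM n (-((a-b : Fin (n+1)):ℤ))) a a = X a b * MonM n (-((a-b : Fin (n+1)):ℤ)) b a := by
      rw [Matrix.mul_apply, Finset.sum_eq_single b]
      · intro c _ hc
        rw [Mon_ne_apply, mul_zero]
        intro hcon
        have hdd : ((n:ℤ)+1) ∣ ((c:ℤ) - (b:ℤ)) := by
          have := Int.dvd_add hcon hab
          have h2 : (c:ℤ) - a - (-((a-b : Fin (n+1)):ℤ)) + ((a:ℤ) - b - ((a - b : Fin (n+1)) : ℤ)) = (c:ℤ) - b := by ring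
          rwa [h2] at this
        have hcb := c.isLt
        have := dvd_small (N := (n:ℤ)+1) (by omega) (by omega) (by omega) hdd
        exact hc (Fin.ext (by omega))
      · simp
    rw [hin]
    obtain ⟨t, ht⟩ := hab
    rw [MonM_apply, MonM_apply, if_pos ⟨-t, by linear_combination -ht⟩,
      if_pos ⟨t, by linear_combination ht⟩]
    rw [show (-((a-b : Fin (n+1)):ℤ) - ((b:ℤ) - a)) = ((n:ℤ)+1) * t by linear_combination ht,
      show ((a-b : Fin (n+1)):ℤ) - ((a:ℤ) - b) = ((n:ℤ)+1) * (-t) by linear_combination -ht,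
      Int.mul_ediv_cancel_left _ (by omega), Int.mul_ediv_cancel_left _ (by omega),
      mul_assoc, ← T_add]
    simp
  · intro k _ hk
    rw [Matrix.diagonal_mul, Mon_ne_apply, mul_zero]
    intro hcon
    have hdd : ((n:ℤ)+1) ∣ (((a - b : Fin (n+1)):ℤ) - k) := by
      have h3 := Int.dvd_sub hcon hab
      have h2 : ((a:ℤ) - b - (k:ℤ)) - ((a:ℤ) - b - ((a - b : Fin (n+1)) : ℤ)) = ((a - b : Fin (n+1)):ℤ) - (k:ℤ) := by ring
      rwa [h2] at h3
    have hk1 := k.isLt; have hab1 := (a-b).isLt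
    have := dvd_small (N := (n:ℤ)+1) (by omega) (by omega) (by omega) hdd
    exact hk (Fin.ext (by omega)).symm
  · simp

/-- the span of off-grade monomials -/
def ZSp (n : ℕ) : Submodule ℂ (Matrix (Fin (n + 1)) (Fin (n + 1)) (LaurentPolynomial ℂ)) :=
  Submodule.span ℂ
    {M : Matrix (Fin (n + 1)) (Fin (n + 1)) (LaurentPolynomial ℂ) |
      ∃ j : ℤ, ¬ ((n + 1 : ℤ) ∣ j) ∧ M = MonM n j}

lemma smul_Mon_mem (r : LaurentPolynomial ℂ) {j : ℤ} (hj : ¬ ((n:ℤ)+1) ∣ j) :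
    r • MonM n j ∈ ZSp n := by
  induction r using LaurentPolynomial.induction_on' with
  | add p q hp hq => rw [add_smul]; exact Submodule.add_mem _ hp hq
  | C_mul_T m a =>
    have h1 : (C a * T m) • MonM n j = a • (T (R := ℂ) m • MonM n j) := by
      rw [mul_smul, ← algebraMap_smul (LaurentPolynomial ℂ) a, C_eq_algebraMap]
    rw [h1, T_smul_Mon]
    apply Submodule.smul_mem
    apply Submodule.subset_span
    refine ⟨j + ((n:ℤ)+1) * m, ?_, rfl⟩
    push_cast
    intro ⟨t, ht⟩
    exact hj ⟨t - m, by linarith⟩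

lemma Mon_mem (hn : 1 ≤ n) {j : ℤ} (hj : ¬ ((n:ℤ)+1) ∣ j) : MonM n j ∈ ZSp n :=
  Submodule.subset_span ⟨j, by push_cast; exact hj, rfl⟩

lemma cancel_nat (x : LaurentPolynomial ℂ)
    (h : x * ((n:ℕ) + 1 : LaurentPolynomial ℂ) = 0) : x = 0 := by
  have hc : ((n:ℕ) + 1 : LaurentPolynomial ℂ) = C ((n:ℕ) + 1 : ℂ) := by
    push_cast
    rw [map_add, map_one, map_natCast]
  have hne : ((n:ℕ) + 1 : ℂ) ≠ 0 := by exact_mod_cast Nat.succ_ne_zero n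
  have := congrArg (fun y => y * C (((n:ℕ) + 1 : ℂ))⁻¹) h
  simp only [zero_mul] at this
  rw [hc, mul_assoc, ← map_mul, mul_inv_cancel₀ hne, map_one, mul_one] at this
  exact this

lemma trace_central (hn : 1 ≤ n) (X : Matrix (Fin (n+1)) (Fin (n+1)) (LaurentPolynomial ℂ))
    (hX : adLam n X = 0) (k : Fin (n+1)) :
    Matrix.trace (X * MonM n (-(k:ℤ))) = X k 0 * ((n:ℕ) + 1 : LaurentPolynomial ℂ) := by
  conv_lhs => rw [central_eq hn X hX]
  rw [Finset.sum_mul, Matrix.trace_sum]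
  rw [Finset.sum_eq_single k]
  · rw [Matrix.smul_mul, Mon_mul_Mon hn, add_neg_cancel, Matrix.trace_smul, trace_Mon_zero',
      smul_eq_mul]
  · intro j _ hj
    rw [Matrix.smul_mul, Mon_mul_Mon hn, Matrix.trace_smul, trace_Mon_not_dvd, smul_zero]
    intro ⟨t, ht⟩
    have hj1 := j.isLt; have hk1 := k.isLt
    have := dvd_small (N := (n:ℤ)+1) (by omega) (by omega) (by omega) ⟨t, ht⟩
    exact hj (Fin.ext (by omega))
  · simp

lemma trace_image (hn : 1 ≤ n) (Y : Matrix (Fin (n+1)) (Fin (n+1)) (LaurentPolynomial ℂ))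
    (j : ℤ) : Matrix.trace (adLam n Y * MonM n j) = 0 := by
  rw [adLam_apply, sub_mul, Matrix.trace_sub, mul_assoc, mul_assoc, lam_mul_Mon hn,
    ← Mon_mul_lam hn, ← mul_assoc, Matrix.trace_mul_cycle]
  rw [← mul_assoc, Matrix.trace_mul_cycle]
  rw [sub_self]

/-- the telescoping solution of `e (a-1) - e a = f a` for sum-zero `f` -/
def eF (n : ℕ) (f : Fin (n+1) → LaurentPolynomial ℂ) (a : Fin (n+1)) : LaurentPolynomial ℂ :=
  -(∑ i ∈ Finset.univ.filter (fun i : Fin (n+1) => 1 ≤ (i:ℕ) ∧ (i:ℕ) ≤ (a:ℕ)), f i)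

lemma eF_prop (f : Fin (n+1) → LaurentPolynomial ℂ) (hf : ∑ a, f a = 0) (a : Fin (n+1)) :
    eF n f (a - 1) - eF n f a = f a := by
  by_cases h : a = 0
  · subst h
    have h1 : ((0 - 1 : Fin (n+1)) : ℕ) = n := by rw [Fin.coe_sub_one, if_pos rfl]
    have hs0 : eF n f 0 = 0 := by
      rw [eF, Finset.filter_false_of_mem, Finset.sum_empty, neg_zero]
      intro i _
      simp only [Fin.val_zero]
      omega
    have hfull : Finset.univ.filter (fun i : Fin (n+1) => 1 ≤ (i:ℕ) ∧ (i:ℕ) ≤ ((0 - 1 : Fin (n+1)) : ℕ)) = Finset.univ.erase 0 := by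
      ext i
      simp only [Finset.mem_filter, Finset.mem_univ, true_and, Finset.mem_erase, h1]
      constructor
      · intro ⟨h2, h3⟩
        refine ⟨?_, trivial⟩
        intro hc
        rw [hc] at h2
        simp at h2
      · intro ⟨h2, _⟩
        have : (i:ℕ) ≠ 0 := fun hc => h2 (Fin.ext (by simpa using hc))
        have := i.isLt
        omega
    rw [eF, hfull, Finset.sum_erase_eq_sub (Finset.mem_univ 0), hf, hs0, sub_zero, zero_sub,
      neg_neg]
  · have h1 : ((a - 1 : Fin (n+1)) : ℕ) = (a:ℕ) - 1 := by rw [Fin.coe_sub_one, if_neg h]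
    have ha0 : 1 ≤ (a:ℕ) := by
      rcases Nat.eq_zero_or_pos (a:ℕ) with h' | h'
      · exact absurd (Fin.ext h') h
      · omega
    have hstep : Finset.univ.filter (fun i : Fin (n+1) => 1 ≤ (i:ℕ) ∧ (i:ℕ) ≤ (a:ℕ)) =
        insert a (Finset.univ.filter (fun i : Fin (n+1) => 1 ≤ (i:ℕ) ∧ (i:ℕ) ≤ ((a - 1 : Fin (n+1)):ℕ))) := by
      ext i
      simp only [Finset.mem_filter, Finset.mem_univ, true_and, Finset.mem_insert, h1]
      constructor
      · intro ⟨h2, h3⟩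
        by_cases hi : i = a
        · exact Or.inl hi
        · refine Or.inr ⟨h2, ?_⟩
          have : (i:ℕ) ≠ (a:ℕ) := fun hc => hi (Fin.ext hc)
          omega
      · intro h2
        rcases h2 with h2 | ⟨h2, h3⟩
        · subst h2; exact ⟨ha0, le_refl _⟩
        · exact ⟨h2, by omega⟩
    have hnotmem : a ∉ Finset.univ.filter (fun i : Fin (n+1) => 1 ≤ (i:ℕ) ∧ (i:ℕ) ≤ ((a - 1 : Fin (n+1)):ℕ)) := by
      simp only [Finset.mem_filter, Finset.mem_univ, true_and, h1]
      omega
    rw [eF, eF, hstep, Finset.sum_insert hnotmem]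
    ring

lemma surj_piece (hn : 1 ≤ n) (f : Fin (n+1) → LaurentPolynomial ℂ) (hf : ∑ a, f a = 0)
    (j : ℤ) : adLam n (Matrix.diagonal (eF n f) * MonM n (j - 1)) = Matrix.diagonal f * MonM n j := by
  rw [adLam_diag_Mon hn, sub_add_cancel, Matrix.diagonal_sub]
  have : (fun i => eF n f (i - 1) - eF n f i) = f := funext (eF_prop f hf)
  rw [this]

lemma mem_slSub {X : Matrix (Fin (n+1)) (Fin (n+1)) (LaurentPolynomial ℂ)} :
    X ∈ slSub n ↔ Matrix.trace X = 0 := by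
  rw [slSub, LinearMap.mem_ker, Matrix.traceLinearMap_apply]

lemma fin_not_dvd (k : Fin (n+1)) (hk : k ≠ 0) : ¬ ((n:ℤ)+1) ∣ ((k:ℕ):ℤ) := by
  intro hc
  have h1 := k.isLt
  have h2 : 0 < (k:ℕ) := by
    rcases Nat.eq_zero_or_pos (k:ℕ) with h' | h'
    · exact absurd (Fin.ext (by simpa using h')) hk
    · exact h'
  have := dvd_small (N := (n:ℤ)+1) (by omega) (by omega) (by omega) hc
  omega

lemma fin0_int : (((0 : Fin (n+1)):ℕ):ℤ) = 0 := by simp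

lemma Ncast : ((n:ℕ) + 1 : LaurentPolynomial ℂ) = C ((n:ℕ) + 1 : ℂ) := by
  push_cast
  rw [map_add, map_one, map_natCast]

lemma Ncast' : ((n:ℕ) : LaurentPolynomial ℂ) + 1 = C (((n:ℕ):ℂ) + 1) := by
  rw [map_add, map_one, map_natCast]

lemma ZSp_le_ker (hn : 1 ≤ n) : ZSp n ≤ LinearMap.ker (adLam n) := by
  apply Submodule.span_le.mpr
  rintro M ⟨j, hj, rfl⟩
  rw [SetLike.mem_coe, LinearMap.mem_ker]
  exact adLam_Mon hn j

lemma ZSp_le_sl (hn : 1 ≤ n) : ZSp n ≤ slSub n := by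
  apply Submodule.span_le.mpr
  rintro M ⟨j, hj, rfl⟩
  rw [SetLike.mem_coe, mem_slSub]
  exact trace_Mon_not_dvd (by push_cast at hj ⊢; exact hj)

theorem main (n : ℕ) (hn : 1 ≤ n) :
    (slSub n ⊓ LinearMap.ker (adLam n) = ZSp n) ∧
    (ZSp n ⊔ Submodule.map (adLam n) (slSub n) = slSub n) ∧
    (ZSp n ⊓ Submodule.map (adLam n) (slSub n) = ⊥) := by
  refine ⟨?_, ?_, ?_⟩
  · apply le_antisymm
    · intro X hX
      rw [Submodule.mem_inf, mem_slSub, LinearMap.mem_ker] at hX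
      obtain ⟨hXtr, hXad⟩ := hX
      have h1 := trace_central hn X hXad 0
      rw [fin0_int, neg_zero, MonM_zero, mul_one, hXtr] at h1
      have h00 : X 0 0 = 0 := cancel_nat _ h1.symm
      rw [central_eq hn X hXad]
      apply Submodule.sum_mem
      intro k _
      by_cases hk : k = 0
      · subst hk
        rw [h00, zero_smul]
        exact Submodule.zero_mem _
      · exact smul_Mon_mem _ (fin_not_dvd k hk)
    · exact le_inf (ZSp_le_sl hn) (ZSp_le_ker hn)
  · apply le_antisymm
    · apply sup_le (ZSp_le_sl hn)
      rintro M ⟨Y, hY, rfl⟩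
      rw [mem_slSub]
      have := trace_image hn Y 0
      rwa [MonM_zero, mul_one] at this
    · intro X hX
      rw [mem_slSub] at hX
      set d : Fin (n+1) → Fin (n+1) → LaurentPolynomial ℂ :=
        fun k a => (X * MonM n (-((k:ℕ):ℤ))) a a with hd
      set c : Fin (n+1) → LaurentPolynomial ℂ :=
        fun k => C (((n:ℕ)+1:ℂ))⁻¹ * Matrix.trace (X * MonM n (-((k:ℕ):ℤ))) with hc
      set f : Fin (n+1) → Fin (n+1) → LaurentPolynomial ℂ := fun k a => d k a - c k with hf
      have hNne : (((n:ℕ):ℂ) + 1) ≠ 0 := by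
        have : ((n:ℕ) + 1 : ℂ) ≠ 0 := by exact_mod_cast Nat.succ_ne_zero n
        push_cast at this
        exact this
      have htr_eq : ∀ k : Fin (n+1), ∑ a, d k a = Matrix.trace (X * MonM n (-((k:ℕ):ℤ))) := by
        intro k; rfl
      have hCC : C (((n:ℕ):ℂ) + 1)⁻¹ * C (((n:ℕ):ℂ) + 1) = 1 := by
        rw [← map_mul, inv_mul_cancel₀ hNne, map_one]
      have hfsum : ∀ k : Fin (n+1), ∑ a, f k a = 0 := by
        intro k
        rw [hf]
        simp only [Finset.sum_sub_distrib, Finset.sum_const, Finset.card_univ,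
          Fintype.card_fin, htr_eq k]
        simp only [hc, nsmul_eq_mul]
        push_cast
        rw [Ncast']
        linear_combination (-(Matrix.trace (X * MonM n (-((k:ℕ):ℤ))))) * hCC
      have hc0 : c 0 = 0 := by
        rw [hc]
        simp only [fin0_int, neg_zero, MonM_zero, mul_one]
        rw [hX, mul_zero]
      have hdecomp : X = ∑ k : Fin (n+1), Matrix.diagonal (d k) * MonM n ((k:ℕ):ℤ) :=
        (gradeD X).symm
      have hsplit : ∀ k : Fin (n+1), Matrix.diagonal (d k) * MonM n ((k:ℕ):ℤ)
          = Matrix.diagonal (f k) * MonM n ((k:ℕ):ℤ) + c k • MonM n ((k:ℕ):ℤ) := by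
        intro k
        have h1 : Matrix.diagonal (d k) = Matrix.diagonal (f k)
            + Matrix.diagonal (fun _ => c k) := by
          rw [Matrix.diagonal_add]
          congr 1
          funext a
          simp only [hf, Pi.add_apply]
          ring
        rw [h1, Matrix.add_mul, ← Matrix.smul_one_eq_diagonal, Matrix.smul_mul, one_mul]
      set E := ∑ k : Fin (n+1), Matrix.diagonal (eF n (f k)) * MonM n (((k:ℕ):ℤ) - 1) with hE
      have hEad : adLam n E = ∑ k : Fin (n+1), Matrix.diagonal (f k) * MonM n ((k:ℕ):ℤ) := by
        rw [hE, map_sum]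
        apply Finset.sum_congr rfl
        intro k _
        exact surj_piece hn (f k) (hfsum k) ((k:ℕ):ℤ)
      set E' := E - (C (((n:ℕ)+1:ℂ))⁻¹ * Matrix.trace E) • (1 :
        Matrix (Fin (n+1)) (Fin (n+1)) (LaurentPolynomial ℂ)) with hE'
      have hE'tr : Matrix.trace E' = 0 := by
        rw [hE', Matrix.trace_sub, Matrix.trace_smul, Matrix.trace_one, smul_eq_mul]
        rw [Fintype.card_fin]
        push_cast
        rw [Ncast']
        linear_combination (-(Matrix.trace E)) * hCC
      have had1 : adLam n (1 : Matrix (Fin (n+1)) (Fin (n+1)) (LaurentPolynomial ℂ)) = 0 := by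
        rw [adLam_apply, mul_one, one_mul, sub_self]
      have hE'ad : adLam n E' = adLam n E := by
        rw [hE', map_sub, adLam_smul, had1, smul_zero, sub_zero]
      have hXeq : X = (∑ k : Fin (n+1), c k • MonM n ((k:ℕ):ℤ)) + adLam n E' := by
        rw [hE'ad, hEad]
        conv_lhs => rw [hdecomp]
        rw [Finset.sum_congr rfl (fun k _ => hsplit k), Finset.sum_add_distrib]
        exact add_comm _ _
      have hzmem : (∑ k : Fin (n+1), c k • MonM n ((k:ℕ):ℤ)) ∈ ZSp n := by
        apply Submodule.sum_mem
        intro k _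
        by_cases hk : k = 0
        · subst hk; rw [hc0, zero_smul]; exact Submodule.zero_mem _
        · exact smul_Mon_mem _ (fin_not_dvd k hk)
      rw [Submodule.mem_sup]
      exact ⟨_, hzmem, adLam n E', ⟨E', mem_slSub.mpr hE'tr, rfl⟩, hXeq.symm⟩
  · rw [eq_bot_iff]
    intro X hX
    rw [Submodule.mem_inf] at hX
    obtain ⟨hX1, hX2⟩ := hX
    have hXad : adLam n X = 0 := LinearMap.mem_ker.mp (ZSp_le_ker hn hX1)
    obtain ⟨Y, hY, hYX⟩ := hX2
    have hcol : ∀ k : Fin (n+1), X k 0 = 0 := by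
      intro k
      have h1 := trace_central hn X hXad k
      have h2 : Matrix.trace (X * MonM n (-((k:ℕ):ℤ))) = 0 := by
        rw [← hYX]; exact trace_image hn Y _
      rw [h2] at h1
      exact cancel_nat _ h1.symm
    rw [Submodule.mem_bot]
    rw [central_eq hn X hXad]
    apply Finset.sum_eq_zero
    intro k _
    rw [hcol k, zero_smul]

/-- Let `L = sl_{n+1}(ℂ[λ,λ⁻¹])` and `Λ` the principal cyclic element (invertible,
with powers `Λ^j = ↑(u^j)` for `j ∈ ℤ`).  Then (i) the centralizer
`{X ∈ L : [Λ,X] = 0}` equals the ℂ-span `Z` of `{Λ^j : j ∈ ℤ, (n+1) ∤ j}`, and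
(ii) `L = Z ⊕ [Λ, L]` as an internal direct sum of ℂ-subspaces. -/
theorem An_principal_decomposition (n : ℕ) (hn : 1 ≤ n) :
    ∃ u : (Matrix (Fin (n + 1)) (Fin (n + 1)) (LaurentPolynomial ℂ))ˣ,
      (u : Matrix (Fin (n + 1)) (Fin (n + 1)) (LaurentPolynomial ℂ)) = LamA n ∧
      (slSub n ⊓ LinearMap.ker (adLam n)
          = Submodule.span ℂ
              {M : Matrix (Fin (n + 1)) (Fin (n + 1)) (LaurentPolynomial ℂ) |
                ∃ j : ℤ, ¬ ((n + 1 : ℤ) ∣ j) ∧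
                  M = ((u ^ j : (Matrix (Fin (n + 1)) (Fin (n + 1)) (LaurentPolynomial ℂ))ˣ) :
                    Matrix (Fin (n + 1)) (Fin (n + 1)) (LaurentPolynomial ℂ))}) ∧
      (Submodule.span ℂ
            {M : Matrix (Fin (n + 1)) (Fin (n + 1)) (LaurentPolynomial ℂ) |
              ∃ j : ℤ, ¬ ((n + 1 : ℤ) ∣ j) ∧
                M = ((u ^ j : (Matrix (Fin (n + 1)) (Fin (n + 1)) (LaurentPolynomial ℂ))ˣ) :
                  Matrix (Fin (n + 1)) (Fin (n + 1)) (LaurentPolynomial ℂ))}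
          ⊔ Submodule.map (adLam n) (slSub n) = slSub n) ∧
      (Submodule.span ℂ
            {M : Matrix (Fin (n + 1)) (Fin (n + 1)) (LaurentPolynomial ℂ) |
              ∃ j : ℤ, ¬ ((n + 1 : ℤ) ∣ j) ∧
                M = ((u ^ j : (Matrix (Fin (n + 1)) (Fin (n + 1)) (LaurentPolynomial ℂ))ˣ) :
                  Matrix (Fin (n + 1)) (Fin (n + 1)) (LaurentPolynomial ℂ))}
          ⊓ Submodule.map (adLam n) (slSub n) = ⊥) := by
  obtain ⟨u, hu1, hu2⟩ := exists_unit (n := n) hn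
  have hSet : {M : Matrix (Fin (n + 1)) (Fin (n + 1)) (LaurentPolynomial ℂ) |
        ∃ j : ℤ, ¬ ((n + 1 : ℤ) ∣ j) ∧
          M = ((u ^ j : (Matrix (Fin (n + 1)) (Fin (n + 1)) (LaurentPolynomial ℂ))ˣ) :
            Matrix (Fin (n + 1)) (Fin (n + 1)) (LaurentPolynomial ℂ))} =
      {M : Matrix (Fin (n + 1)) (Fin (n + 1)) (LaurentPolynomial ℂ) |
        ∃ j : ℤ, ¬ ((n + 1 : ℤ) ∣ j) ∧ M = MonM n j} := by
    ext M
    constructor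
    · rintro ⟨j, hj, rfl⟩
      exact ⟨j, hj, hu2 j⟩
    · rintro ⟨j, hj, rfl⟩
      exact ⟨j, hj, (hu2 j).symm⟩
  obtain ⟨h1, h2, h3⟩ := main n hn
  refine ⟨u, hu1, ?_, ?_, ?_⟩
  · rw [hSet]; exact h1
  · rw [hSet]; exact h2
  · rw [hSet]; exact h3
end
end
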